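/- arXiv:1007.1119 — 7 statements merged into one kernel-verified Lean document; each statement's English description precedes it below -/
import Mathlib

section
/- Let g = ⊕_{λ∈Λ} W_λ be a finite-dimensional real Lie algebra graded over a finite set Λ ⊆ [1,∞) of weights, i.e. [W_λ, W_μ] ⊆ W_{λ+μ} (with W_ν = 0 for ν ∉ Λ). Then every term of the descending central series satisfies g_[s] ⊆ ⊕_{λ ≥ s} W_λ for each integer s ≥ 1. Consequently, if g is n-step nilpotent, then Σ_{s=1}^n dim g_[s] ≤ Σ_{λ∈Λ} λ · dim W_λ, i.e. the degree of polynomial growth Q_G is at most the homogeneous dimension Q_δ. -/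
theorem aux_finrank_finset_sup_le {V : Type*} [AddCommGroup V] [Module ℝ V]
    [FiniteDimensional ℝ V] (t : Finset ℝ) (W : ℝ → Submodule ℝ V) :
    Module.finrank ℝ ↥(t.sup W) ≤ ∑ l ∈ t, Module.finrank ℝ (W l) := by
  classical
  refine Finset.induction_on t (by simp) ?_
  intro a s ha ih
  rw [Finset.sup_insert, Finset.sum_insert ha]
  exact le_trans (Submodule.finrank_add_le_finrank_add_finrank _ _) (by omega)

/-- For a finite-dimensional real Lie algebra graded over a finite set `Λ ⊆ [1,∞)` of weights,
every term of the descending central series `g_[s]` (for `s ≥ 1`, which in Mathlib numbering is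
`lowerCentralSeries (s-1)`) is contained in `⊕_{λ ≥ s} W_λ`; consequently, if `g` is `n`-step
nilpotent then `Σ_{s=1}^n dim g_[s] ≤ Σ_{λ ∈ Λ} λ · dim W_λ`, i.e. `Q_G ≤ Q_δ`. -/
theorem graded_lie_algebra_lcs_le_and_growth_le_homogeneous_dim
    (L : Type*) [LieRing L] [LieAlgebra ℝ L] [FiniteDimensional ℝ L]
    (Λ : Finset ℝ) (hΛ : ∀ l ∈ Λ, (1 : ℝ) ≤ l)
    (W : ℝ → Submodule ℝ L)
    (hW0 : ∀ l : ℝ, l ∉ Λ → W l = ⊥)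
    (hdirect : DirectSum.IsInternal (fun l : {x // x ∈ Λ} => W l.1))
    (hbr : ∀ (l m : ℝ) (x y : L), x ∈ W l → y ∈ W m → ⁅x, y⁆ ∈ W (l + m)) :
    (∀ s : ℕ, 1 ≤ s →
      (LieModule.lowerCentralSeries ℝ L L (s - 1)).toSubmodule ≤
        ⨆ l ∈ Λ, ⨆ _ : (s : ℝ) ≤ l, W l) ∧
    ∀ n : ℕ, LieModule.lowerCentralSeries ℝ L L n = ⊥ →
      ∑ s ∈ Finset.Icc 1 n,
          ((Module.finrank ℝ (LieModule.lowerCentralSeries ℝ L L (s - 1)).toSubmodule : ℝ)) ≤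
        ∑ l ∈ Λ, l * (Module.finrank ℝ (W l) : ℝ) := by
  classical
  set S : ℝ → Submodule ℝ L := fun r => ⨆ l ∈ Λ, ⨆ _ : r ≤ l, W l with hSdef
  -- basic inclusion
  have hWle : ∀ (r l : ℝ), l ∈ Λ → r ≤ l → W l ≤ S r := by
    intro r l hl hrl
    refine le_iSup_of_le l ?_
    rw [iSup_pos hl, iSup_pos hrl]
  -- induction principle for membership in S r
  have hS_ind : ∀ (r : ℝ) (C : L → Prop) (x : L), x ∈ S r →
      (∀ l ∈ Λ, r ≤ l → ∀ y ∈ W l, C y) → C 0 →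
      (∀ y z : L, C y → C z → C (y + z)) → C x := by
    intro r C x hx hmem h0 hadd
    refine Submodule.iSup_induction
      (fun l : ℝ => ⨆ _ : l ∈ Λ, ⨆ _ : r ≤ l, W l) (motive := C) hx ?_ h0 hadd
    intro l y hy
    change y ∈ ⨆ _ : l ∈ Λ, ⨆ _ : r ≤ l, W l at hy
    by_cases hl : l ∈ Λ
    · by_cases hrl : r ≤ l
      · rw [iSup_pos hl, iSup_pos hrl] at hy
        exact hmem l hl hrl y hy
      · rw [iSup_pos hl, iSup_neg hrl, Submodule.mem_bot] at hy
        simpa [hy] using h0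
    · rw [iSup_neg hl, Submodule.mem_bot] at hy
      simpa [hy] using h0
  -- the whole algebra is S 1
  have htop : (⊤ : Submodule ℝ L) ≤ S 1 := by
    rw [← hdirect.submodule_iSup_eq_top]
    exact iSup_le fun l => hWle 1 l.1 l.2 (hΛ l.1 l.2)
  -- brackets raise the filtration
  have hbrS : ∀ (r : ℝ) (x y : L), y ∈ S r → ⁅x, y⁆ ∈ S (r + 1) := by
    intro r x y hy
    have hx : x ∈ S 1 := htop trivial
    refine hS_ind 1 (fun x => ⁅x, y⁆ ∈ S (r + 1)) x hx ?_ ?_ ?_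
    · intro m hm h1m x' hx'
      refine hS_ind r (fun y' => ⁅x', y'⁆ ∈ S (r + 1)) y hy ?_ ?_ ?_
      · intro l hl hrl y' hy'
        have hb : ⁅x', y'⁆ ∈ W (m + l) := hbr m l x' y' hx' hy'
        by_cases hml : m + l ∈ Λ
        · exact hWle (r + 1) (m + l) hml (by linarith) hb
        · rw [hW0 _ hml, Submodule.mem_bot] at hb
          rw [hb]; exact Submodule.zero_mem _
      · simpa using Submodule.zero_mem (S (r + 1))
      · intro a b ha hb
        rw [lie_add]; exact Submodule.add_mem _ ha hb
    · simpa using Submodule.zero_mem (S (r + 1))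
    · intro a b ha hb
      rw [add_lie]; exact Submodule.add_mem _ ha hb
  -- lower central series bound
  have hlcs : ∀ t : ℕ, (LieModule.lowerCentralSeries ℝ L L t).toSubmodule ≤ S (t + 1) := by
    intro t
    induction t with
    | zero => simpa using htop
    | succ t ih =>
      rw [LieModule.lowerCentralSeries_succ, LieSubmodule.lieIdeal_oper_eq_linear_span',
        Submodule.span_le]
      rintro z ⟨x, -, m, hm, rfl⟩
      have h1 : ⁅x, m⁆ ∈ S ((t : ℝ) + 1 + 1) := hbrS _ x m (ih hm)
      have e : ((t + 1 : ℕ) : ℝ) + 1 = (t : ℝ) + 1 + 1 := by push_cast; ring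
      rw [SetLike.mem_coe, e]
      exact h1
  have part1 : ∀ s : ℕ, 1 ≤ s →
      (LieModule.lowerCentralSeries ℝ L L (s - 1)).toSubmodule ≤ S s := by
    intro s hs
    have h := hlcs (s - 1)
    have e : ((s - 1 : ℕ) : ℝ) + 1 = (s : ℝ) := by
      rw [Nat.cast_sub hs]; simp
    rwa [e] at h
  refine ⟨part1, ?_⟩
  intro n _
  -- S r is the sup over the filtered weight set
  have hSfilter : ∀ r : ℝ, S r = (Λ.filter (fun l => r ≤ l)).sup W := by
    intro r
    rw [Finset.sup_eq_iSup]
    apply le_antisymm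
    · refine iSup_le fun l => ?_
      by_cases hl : l ∈ Λ
      · by_cases hrl : r ≤ l
        · rw [iSup_pos hl, iSup_pos hrl]
          exact le_iSup_of_le l (by rw [iSup_pos (Finset.mem_filter.mpr ⟨hl, hrl⟩)])
        · rw [iSup_pos hl, iSup_neg hrl]; exact bot_le
      · rw [iSup_neg hl]; exact bot_le
    · refine iSup_le fun l => ?_
      by_cases hl : l ∈ Λ.filter (fun l => r ≤ l)
      · rw [iSup_pos hl]
        obtain ⟨h1, h2⟩ := Finset.mem_filter.mp hl
        exact hWle r l h1 h2
      · rw [iSup_neg hl]; exact bot_le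
  -- per-term rank bound
  have hrank : ∀ s : ℕ, 1 ≤ s →
      (Module.finrank ℝ (LieModule.lowerCentralSeries ℝ L L (s - 1)).toSubmodule : ℝ) ≤
        ∑ l ∈ Λ, (if (s : ℝ) ≤ l then (Module.finrank ℝ (W l) : ℝ) else 0) := by
    intro s hs
    have h1 : Module.finrank ℝ (LieModule.lowerCentralSeries ℝ L L (s - 1)).toSubmodule ≤
        Module.finrank ℝ (S s) := Submodule.finrank_mono (part1 s hs)
    have h2 : Module.finrank ℝ (S s) ≤
        ∑ l ∈ Λ.filter (fun l => (s : ℝ) ≤ l), Module.finrank ℝ (W l) := by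
      rw [hSfilter]
      exact aux_finrank_finset_sup_le _ _
    calc (Module.finrank ℝ (LieModule.lowerCentralSeries ℝ L L (s - 1)).toSubmodule : ℝ)
        ≤ ((∑ l ∈ Λ.filter (fun l => (s : ℝ) ≤ l), Module.finrank ℝ (W l) : ℕ) : ℝ) := by
          exact_mod_cast le_trans h1 h2
      _ = ∑ l ∈ Λ, (if (s : ℝ) ≤ l then (Module.finrank ℝ (W l) : ℝ) else 0) := by
          rw [Finset.sum_filter]; push_cast; rfl
  calc ∑ s ∈ Finset.Icc 1 n,
        ((Module.finrank ℝ (LieModule.lowerCentralSeries ℝ L L (s - 1)).toSubmodule : ℝ))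
      ≤ ∑ s ∈ Finset.Icc 1 n, ∑ l ∈ Λ,
          (if (s : ℝ) ≤ l then (Module.finrank ℝ (W l) : ℝ) else 0) := by
        refine Finset.sum_le_sum fun s hs => hrank s (Finset.mem_Icc.mp hs).1
    _ = ∑ l ∈ Λ, ∑ s ∈ Finset.Icc 1 n,
          (if (s : ℝ) ≤ l then (Module.finrank ℝ (W l) : ℝ) else 0) := Finset.sum_comm
    _ ≤ ∑ l ∈ Λ, l * (Module.finrank ℝ (W l) : ℝ) := by
        refine Finset.sum_le_sum fun l hl => ?_
        have hl1 : (1 : ℝ) ≤ l := hΛ l hl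
        rw [← Finset.sum_filter, Finset.sum_const, nsmul_eq_mul]
        have hcard : (((Finset.Icc 1 n).filter (fun s : ℕ => (s : ℝ) ≤ l)).card : ℝ) ≤ l := by
          have hsub : (Finset.Icc 1 n).filter (fun s : ℕ => (s : ℝ) ≤ l) ⊆
              Finset.Icc 1 ⌊l⌋₊ := by
            intro s hs
            obtain ⟨hs1, hs2⟩ := Finset.mem_filter.mp hs
            exact Finset.mem_Icc.mpr ⟨(Finset.mem_Icc.mp hs1).1, Nat.le_floor hs2⟩
          calc (((Finset.Icc 1 n).filter (fun s : ℕ => (s : ℝ) ≤ l)).card : ℝ)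
              ≤ ((Finset.Icc 1 ⌊l⌋₊).card : ℝ) := by
                exact_mod_cast Finset.card_le_card hsub
            _ = (⌊l⌋₊ : ℝ) := by rw [Nat.card_Icc]; simp
            _ ≤ l := Nat.floor_le (by linarith)
        exact mul_le_mul_of_nonneg_right hcard (by positivity)
end

section
/- Let σ be a regular Borel measure on ℝ^n satisfying σ(δ_t(A)) = t^Q σ(A) for all t > 0 and all Borel sets A, for some Q > 0, where δ_t are dilations with exponents λ_j ≥ 1. Let |·|_δ be a homogeneous norm and S = {λ ∈ ℝ^n : |λ|_δ = 1}. Then S is compact and there exists a regular Borel measure τ on S such that ∫_{ℝ^n} f dσ = ∫_S ∫_0^∞ f(δ_t(ω)) t^{Q−1} dt dτ(ω) for every Borel function f : ℝ^n → [0,∞]. -/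
open MeasureTheory Set
open scoped ENNReal

namespace PolarAux

variable {n : ℕ}

/-- The anisotropic dilation. -/
noncomputable def dil (lam : Fin n → ℝ) (t : ℝ) (x : Fin n → ℝ) : Fin n → ℝ :=
  fun i => t ^ lam i * x i

lemma dil_dil {lam : Fin n → ℝ} {s t : ℝ} (hs : 0 ≤ s) (ht : 0 ≤ t) (x : Fin n → ℝ) :
    dil lam s (dil lam t x) = dil lam (s * t) x := by
  funext i
  simp only [dil, Real.mul_rpow hs ht]
  ring

lemma dil_one {lam : Fin n → ℝ} (x : Fin n → ℝ) : dil lam 1 x = x := by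
  funext i; simp [dil]

lemma dil_zero {lam : Fin n → ℝ} (hlam : ∀ i, 1 ≤ lam i) (x : Fin n → ℝ) :
    dil lam 0 x = 0 := by
  funext i
  simp [dil, Real.zero_rpow (by linarith [hlam i] : lam i ≠ 0)]

lemma measurable_dilT (lam : Fin n → ℝ) :
    Measurable (fun p : (Fin n → ℝ) × ℝ => dil lam p.2 p.1) := by
  apply measurable_pi_lambda
  intro i
  exact (measurable_snd.pow measurable_const).mul ((measurable_pi_apply i).comp measurable_fst)

lemma continuous_dilT {lam : Fin n → ℝ} (hlam : ∀ i, 1 ≤ lam i) :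
    Continuous (fun p : (Fin n → ℝ) × ℝ => dil lam p.2 p.1) := by
  apply continuous_pi
  intro i
  exact ((Real.continuous_rpow_const (by linarith [hlam i])).comp continuous_snd).mul
    ((continuous_apply i).comp continuous_fst)

/-- positivity of `N` away from `0`. -/
lemma N_pos {N : (Fin n → ℝ) → ℝ} (hNnn : ∀ x, 0 ≤ N x) (hNz : ∀ x, N x = 0 ↔ x = 0)
    {x : Fin n → ℝ} (hx : x ≠ 0) : 0 < N x :=
  lt_of_le_of_ne (hNnn x) (fun h => hx ((hNz x).1 h.symm))

/-- Key compactness: the closed unit ball of the homogeneous norm is compact. -/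
lemma isCompact_ball (lam : Fin n → ℝ) (hlam : ∀ i, 1 ≤ lam i)
    (N : (Fin n → ℝ) → ℝ) (hNc : Continuous N) (hNnn : ∀ x, 0 ≤ N x)
    (hNz : ∀ x, N x = 0 ↔ x = 0)
    (hNh : ∀ t : ℝ, 0 < t → ∀ x, N (dil lam t x) = t * N x) :
    IsCompact {x : Fin n → ℝ | N x ≤ 1} := by
  rcases Nat.eq_zero_or_pos n with hn | hn
  · haveI : IsEmpty (Fin n) := by subst hn; infer_instance
    haveI : Subsingleton (Fin n → ℝ) := ⟨fun a b => funext fun i => isEmptyElim i⟩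
    exact Set.Subsingleton.isCompact (fun a _ b _ => Subsingleton.elim a b)
  · haveI : Nonempty (Fin n) := ⟨⟨0, hn⟩⟩
    obtain ⟨u₀, hu₀K, hmin'⟩ :=
      (isCompact_sphere (0 : Fin n → ℝ) 1).exists_isMinOn
        (NormedSpace.sphere_nonempty.2 zero_le_one) hNc.continuousOn
    have hmin : ∀ u ∈ Metric.sphere (0 : Fin n → ℝ) 1, N u₀ ≤ N u := fun u hu =>
      isMinOn_iff.1 hmin' u hu
    have hu₀ : u₀ ≠ 0 := by
      intro h
      have := mem_sphere_zero_iff_norm.1 hu₀K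
      rw [h] at this; simp at this
    have hc : 0 < N u₀ := N_pos hNnn hNz hu₀
    set c : ℝ := N u₀ with hc_def
    have himg : IsCompact ((fun p : (Fin n → ℝ) × ℝ => dil lam p.2 p.1) ''
        (Metric.sphere (0 : Fin n → ℝ) 1 ×ˢ Icc (0 : ℝ) c⁻¹)) :=
      ((isCompact_sphere _ _).prod isCompact_Icc).image (continuous_dilT hlam)
    refine himg.of_isClosed_subset (IsClosed.preimage hNc isClosed_Iic) ?_
    rintro x (hx : N x ≤ 1)
    by_cases hx0 : x = 0
    · refine ⟨(u₀, 0), ⟨hu₀K, ⟨le_refl _, by positivity⟩⟩, ?_⟩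
      simp [dil_zero hlam, hx0]
    · obtain ⟨j, hj⟩ : ∃ j, x j ≠ 0 := by
        by_contra h
        push_neg at h
        exact hx0 (funext fun i => h i)
      set s₁ : ℝ := max 1 (2 / |x j|) with hs₁def
      have hs₁1 : (1:ℝ) ≤ s₁ := le_max_left _ _
      have habs : 0 < |x j| := abs_pos.2 hj
      have hcont : Continuous fun s : ℝ => ‖dil lam s x‖ :=
        (((continuous_dilT hlam).comp (Continuous.prodMk continuous_const continuous_id)).norm)
      have h0 : ‖dil lam 0 x‖ = 0 := by rw [dil_zero hlam]; simp
      have h1 : (1:ℝ) ≤ ‖dil lam s₁ x‖ := by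
        have hle : s₁ ^ lam j * |x j| ≤ ‖dil lam s₁ x‖ := by
          have := norm_le_pi_norm (dil lam s₁ x) j
          rw [Real.norm_eq_abs] at this
          calc s₁ ^ lam j * |x j| = |s₁ ^ lam j * x j| := by
                rw [abs_mul, abs_of_nonneg (Real.rpow_nonneg (by linarith) _)]
            _ ≤ ‖dil lam s₁ x‖ := this
        have h2 : s₁ ≤ s₁ ^ lam j := by
          calc s₁ = s₁ ^ (1:ℝ) := (Real.rpow_one s₁).symm
            _ ≤ s₁ ^ lam j := Real.rpow_le_rpow_of_exponent_le hs₁1 (hlam j)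
        have h3 : (2 / |x j|) * |x j| ≤ s₁ * |x j| :=
          mul_le_mul_of_nonneg_right (le_max_right _ _) habs.le
        rw [div_mul_cancel₀ _ habs.ne'] at h3
        nlinarith [Real.rpow_nonneg (show (0:ℝ) ≤ s₁ by linarith) (lam j)]
      obtain ⟨s, hsmem, hs⟩ : ∃ s ∈ Icc (0:ℝ) s₁, ‖dil lam s x‖ = 1 := by
        have := intermediate_value_Icc (by linarith : (0:ℝ) ≤ s₁) hcont.continuousOn
        have h1mem : (1:ℝ) ∈ Icc ‖dil lam 0 x‖ ‖dil lam s₁ x‖ := by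
          rw [h0]; exact ⟨zero_le_one, h1⟩
        exact this h1mem
      have hspos : 0 < s := by
        rcases lt_or_eq_of_le hsmem.1 with h | h
        · exact h
        · exfalso; rw [← h] at hs; rw [h0] at hs; norm_num at hs
      set u : Fin n → ℝ := dil lam s x with hu_def
      have huK : u ∈ Metric.sphere (0 : Fin n → ℝ) 1 := by
        rw [mem_sphere_zero_iff_norm]; exact hs
      have hxu : dil lam s⁻¹ u = x := by
        rw [hu_def, dil_dil (by positivity) hspos.le, inv_mul_cancel₀ hspos.ne', dil_one]
      have hNu : N u = s * N x := hNh s hspos x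
      have hNupos : 0 < N u := by
        rw [hNu]; exact mul_pos hspos (N_pos hNnn hNz hx0)
      have hsinv : s⁻¹ = N x / N u := by
        have hNxpos := N_pos hNnn hNz hx0
        rw [hNu]
        field_simp
      have hsle : s⁻¹ ≤ c⁻¹ := by
        rw [hsinv, inv_eq_one_div]
        exact div_le_div₀ zero_le_one hx hc (hmin u huK)
      exact ⟨(u, s⁻¹), ⟨huK, ⟨by positivity, hsle⟩⟩, hxu⟩

/-- The "polar part" map. -/
noncomputable def pol (lam : Fin n → ℝ) (N : (Fin n → ℝ) → ℝ) (x : Fin n → ℝ) : Fin n → ℝ :=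
  dil lam (N x)⁻¹ x

lemma measurable_pol (lam : Fin n → ℝ) {N : (Fin n → ℝ) → ℝ} (hNc : Continuous N) :
    Measurable (pol lam N) :=
  (measurable_dilT lam).comp (measurable_id.prodMk hNc.measurable.inv)

section NLemmas

variable {lam : Fin n → ℝ} {N : (Fin n → ℝ) → ℝ}

lemma N_pol (hNh : ∀ t : ℝ, 0 < t → ∀ x, N (dil lam t x) = t * N x)
    {x : Fin n → ℝ} (hx : 0 < N x) : N (pol lam N x) = 1 := by
  rw [pol, hNh _ (inv_pos.2 hx), inv_mul_cancel₀ hx.ne']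

lemma pol_dil (hNh : ∀ t : ℝ, 0 < t → ∀ x, N (dil lam t x) = t * N x)
    {t : ℝ} (ht : 0 < t) {x : Fin n → ℝ} (hx : 0 < N x) :
    pol lam N (dil lam t x) = pol lam N x := by
  have hkey : ((t * N x)⁻¹ * t) = (N x)⁻¹ := by
    field_simp
  rw [pol, pol, hNh t ht, dil_dil (inv_nonneg.2 (mul_pos ht hx).le) ht.le, hkey]

lemma dil_pol (hNnn : ∀ x, 0 ≤ N x) (hNz : ∀ x, N x = 0 ↔ x = 0)
    {x : Fin n → ℝ} (hx : x ≠ 0) : dil lam (N x) (pol lam N x) = x := by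
  have h := N_pos hNnn hNz hx
  rw [pol, dil_dil h.le (inv_nonneg.2 h.le), mul_inv_cancel₀ h.ne', dil_one]

end NLemmas

/-- The "polar rectangle". -/
def Aset (lam : Fin n → ℝ) (N : (Fin n → ℝ) → ℝ) (E : Set (Fin n → ℝ)) (a b : ℝ) :
    Set (Fin n → ℝ) :=
  pol lam N ⁻¹' E ∩ N ⁻¹' Ioc a b

lemma measurable_Aset (lam : Fin n → ℝ) {N : (Fin n → ℝ) → ℝ} (hNc : Continuous N)
    {E : Set (Fin n → ℝ)} (hE : MeasurableSet E) (a b : ℝ) :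
    MeasurableSet (Aset lam N E a b) :=
  ((measurable_pol lam hNc) hE).inter (hNc.measurable measurableSet_Ioc)

/-- Scaling of polar rectangles. -/
lemma Aset_scale {lam : Fin n → ℝ} {N : (Fin n → ℝ) → ℝ}
    (hNh : ∀ t : ℝ, 0 < t → ∀ x, N (dil lam t x) = t * N x)
    (E : Set (Fin n → ℝ)) {b : ℝ} (hb : 0 < b) :
    Aset lam N E 0 b = dil lam b '' Aset lam N E 0 1 := by
  ext x
  constructor
  · rintro ⟨hxE, hxN⟩
    refine ⟨dil lam b⁻¹ x, ⟨?_, ?_⟩, ?_⟩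
    · show pol lam N (dil lam b⁻¹ x) ∈ E
      rw [pol_dil hNh (inv_pos.2 hb) hxN.1]
      exact hxE
    · show N (dil lam b⁻¹ x) ∈ Ioc (0:ℝ) 1
      rw [hNh _ (inv_pos.2 hb)]
      constructor
      · exact mul_pos (inv_pos.2 hb) hxN.1
      · rw [← inv_mul_cancel₀ hb.ne']
        exact mul_le_mul_of_nonneg_left hxN.2 (inv_nonneg.2 hb.le)
    · rw [dil_dil hb.le (inv_nonneg.2 hb.le), mul_inv_cancel₀ hb.ne', dil_one]
  · rintro ⟨y, ⟨hyE, hyN⟩, rfl⟩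
    constructor
    · show pol lam N (dil lam b y) ∈ E
      rw [pol_dil hNh hb hyN.1]
      exact hyE
    · show N (dil lam b y) ∈ Ioc (0:ℝ) b
      rw [hNh _ hb]
      exact ⟨mul_pos hb hyN.1, by
        calc b * N y ≤ b * 1 := mul_le_mul_of_nonneg_left hyN.2 hb.le
          _ = b := mul_one b⟩

/-- Scaling of balls of the homogeneous norm. -/
lemma ball_scale {lam : Fin n → ℝ} {N : (Fin n → ℝ) → ℝ}
    (hNh : ∀ t : ℝ, 0 < t → ∀ x, N (dil lam t x) = t * N x)
    {b : ℝ} (hb : 0 < b) :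
    {x : Fin n → ℝ | N x ≤ b} = dil lam b '' {x : Fin n → ℝ | N x ≤ 1} := by
  ext x
  constructor
  · intro hx
    refine ⟨dil lam b⁻¹ x, ?_, ?_⟩
    · show N (dil lam b⁻¹ x) ≤ 1
      rw [hNh _ (inv_pos.2 hb), ← inv_mul_cancel₀ hb.ne']
      exact mul_le_mul_of_nonneg_left hx (inv_nonneg.2 hb.le)
    · rw [dil_dil hb.le (inv_nonneg.2 hb.le), mul_inv_cancel₀ hb.ne', dil_one]
  · rintro ⟨y, hy, rfl⟩
    show N (dil lam b y) ≤ b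
    rw [hNh _ hb]
    calc b * N y ≤ b * 1 := mul_le_mul_of_nonneg_left hy hb.le
      _ = b := mul_one b

lemma eq_zero_of_self_eq_mul {a c : ℝ≥0∞} (hfin : a ≠ ⊤) (hc : 1 < c) (h : a = c * a) :
    a = 0 := by
  by_contra h0
  have hlt : (1 : ℝ≥0∞) * a < c * a := by
    rw [mul_comm 1 a, mul_comm c a]; exact ENNReal.mul_lt_mul_right h0 hfin hc
  rw [one_mul, ← h] at hlt
  exact lt_irrefl a hlt

end PolarAux

open PolarAux

/-- Polar decomposition of a `δ_t`-homogeneous regular Borel measure `σ` of degree `Q > 0` on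
`ℝ^n`: the unit sphere `S` of a homogeneous norm is compact and there is a regular Borel measure
`τ` on `S` such that `∫ f dσ = ∫_S ∫_0^∞ f(δ_t ω) t^{Q-1} dt dτ(ω)` for all nonnegative Borel
functions `f`. -/
theorem homogeneous_measure_polar_decomposition
    (n : ℕ) (lam : Fin n → ℝ) (hlam : ∀ i, 1 ≤ lam i)
    (N : (Fin n → ℝ) → ℝ) (hNc : Continuous N) (hNnn : ∀ x, 0 ≤ N x)
    (hNz : ∀ x, N x = 0 ↔ x = 0)
    (hNh : ∀ t : ℝ, 0 < t → ∀ x, N (fun i => t ^ lam i * x i) = t * N x)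
    (σ : Measure (Fin n → ℝ)) (hreg : σ.Regular) (Q : ℝ) (hQ : 0 < Q)
    (hhom : ∀ t : ℝ, 0 < t → ∀ A : Set (Fin n → ℝ), MeasurableSet A →
      σ ((fun x => fun i => t ^ lam i * x i) '' A) = ENNReal.ofReal (t ^ Q) * σ A) :
    IsCompact {x : Fin n → ℝ | N x = 1} ∧
    ∃ τ : Measure {x : Fin n → ℝ // N x = 1}, τ.Regular ∧
      ∀ f : (Fin n → ℝ) → ENNReal, Measurable f →
        ∫⁻ x, f x ∂σ =
          ∫⁻ ω, (∫⁻ t in Ioi (0 : ℝ),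
            f (fun i => t ^ lam i * (ω : Fin n → ℝ) i) * ENNReal.ofReal (t ^ (Q - 1))) ∂τ := by
  classical
  haveI : σ.Regular := hreg
  -- translate the hypotheses to `dil` form
  have hNh' : ∀ t : ℝ, 0 < t → ∀ x, N (dil lam t x) = t * N x := fun t ht x => hNh t ht x
  have hhom' : ∀ t : ℝ, 0 < t → ∀ A : Set (Fin n → ℝ), MeasurableSet A →
      σ (dil lam t '' A) = ENNReal.ofReal (t ^ Q) * σ A := fun t ht A hA => hhom t ht A hA
  -- compactness of balls
  have hball : IsCompact {x : Fin n → ℝ | N x ≤ 1} :=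
    isCompact_ball lam hlam N hNc hNnn hNz hNh'
  have hballb : ∀ b : ℝ, 0 < b → IsCompact {x : Fin n → ℝ | N x ≤ b} := by
    intro b hb
    rw [ball_scale hNh' hb]
    exact hball.image (continuous_pi fun i => continuous_const.mul (continuous_apply i))
  have hfinb : ∀ b : ℝ, 0 < b → σ {x : Fin n → ℝ | N x ≤ b} ≠ ⊤ :=
    fun b hb => ((hballb b hb).measure_lt_top).ne
  -- compactness of the sphere
  have hSmeas : MeasurableSet {x : Fin n → ℝ | N x = 1} :=
    hNc.measurable (measurableSet_singleton 1)
  have hScompact : IsCompact {x : Fin n → ℝ | N x = 1} := by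
    refine hball.of_isClosed_subset (IsClosed.preimage hNc isClosed_singleton) ?_
    intro x hx
    exact le_of_eq hx
  refine ⟨hScompact, ?_⟩
  -- the origin is null
  have σ0 : σ ({0} : Set (Fin n → ℝ)) = 0 := by
    have h2 : dil lam 2 '' ({0} : Set (Fin n → ℝ)) = {0} := by
      rw [Set.image_singleton]
      congr 1
      funext i
      simp [dil]
    have := hhom' 2 two_pos {0} (measurableSet_singleton 0)
    rw [h2] at this
    refine eq_zero_of_self_eq_mul ?_ ?_ this
    · refine ne_top_of_le_ne_top (hfinb 1 one_pos) (measure_mono ?_)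
      intro x hx
      rw [mem_singleton_iff] at hx
      subst hx
      show N 0 ≤ 1
      rw [(hNz 0).2 rfl]
      exact zero_le_one
    · rw [← ENNReal.ofReal_one]
      exact ENNReal.ofReal_lt_ofReal_iff_of_nonneg zero_le_one |>.2
        (Real.one_lt_rpow_iff_of_pos two_pos |>.2 (Or.inl ⟨one_lt_two, hQ⟩))
  -- notation
  set T : (Fin n → ℝ) × ℝ → (Fin n → ℝ) := fun p => dil lam p.2 p.1 with hT_def
  set Φ : (Fin n → ℝ) → (Fin n → ℝ) × ℝ := fun x => (pol lam N x, N x) with hΦ_def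
  have hT : Measurable T := measurable_dilT lam
  have hπ : Measurable (pol lam N) := measurable_pol lam hNc
  have hΦ : Measurable Φ := hπ.prodMk hNc.measurable
  set U : Set (Fin n → ℝ) := ({0} : Set (Fin n → ℝ))ᶜ with hU_def
  have hUmeas : MeasurableSet U := (measurableSet_singleton 0).compl
  -- ν' and τ'
  set ν' : Set (Fin n → ℝ) → ℝ≥0∞ := fun E => σ (Aset lam N E 0 1) with hν'_def
  set τ' : Measure (Fin n → ℝ) :=
    ENNReal.ofReal Q • Measure.map (pol lam N) (σ.restrict (Aset lam N univ 0 1)) with hτ'_def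
  set ρ : Measure ℝ :=
    (volume.restrict (Ioi (0:ℝ))).withDensity (fun t => ENNReal.ofReal (t ^ (Q-1))) with hρ_def
  have hν'fin : ∀ E : Set (Fin n → ℝ), ν' E ≠ ⊤ := by
    intro E
    refine ne_top_of_le_ne_top (hfinb 1 one_pos) (measure_mono ?_)
    rintro x ⟨-, hx2⟩
    exact hx2.2
  -- basic τ' facts
  have hτ'app : ∀ E : Set (Fin n → ℝ), MeasurableSet E → τ' E = ENNReal.ofReal Q * ν' E := by
    intro E hE
    have hset : pol lam N ⁻¹' E ∩ Aset lam N univ 0 1 = Aset lam N E 0 1 := by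
      ext x
      simp [Aset, and_assoc]
    rw [hτ'_def, Measure.smul_apply, smul_eq_mul,
      Measure.map_apply hπ hE,
      Measure.restrict_apply (hπ hE), hset]
  have hτ'fin : IsFiniteMeasure τ' := by
    constructor
    rw [hτ'app univ MeasurableSet.univ]
    exact ENNReal.mul_lt_top ENNReal.ofReal_lt_top (hν'fin univ).lt_top
  haveI := hτ'fin
  -- σ scaling on polar rectangles
  have key1 : ∀ E : Set (Fin n → ℝ), MeasurableSet E → ∀ b : ℝ, 0 < b →
      σ (Aset lam N E 0 b) = ENNReal.ofReal (b ^ Q) * ν' E := by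
    intro E hE b hb
    rw [Aset_scale hNh' E hb]
    exact hhom' b hb _ (measurable_Aset lam hNc hE 0 1)
  have key2 : ∀ E : Set (Fin n → ℝ), MeasurableSet E → ∀ a b : ℝ, 0 ≤ a → a < b →
      σ (Aset lam N E a b) = ENNReal.ofReal (b ^ Q - a ^ Q) * ν' E := by
    intro E hE a b ha hab
    have hsplit : Aset lam N E 0 a ∪ Aset lam N E a b = Aset lam N E 0 b := by
      rw [Aset, Aset, Aset, ← Set.inter_union_distrib_left, ← Set.preimage_union,
        Ioc_union_Ioc_eq_Ioc ha hab.le]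
    have hdisj : Disjoint (Aset lam N E 0 a) (Aset lam N E a b) := by
      refine Disjoint.mono inter_subset_right inter_subset_right ?_
      exact Disjoint.preimage N (Ioc_disjoint_Ioc_of_le le_rfl)
    have hsum : σ (Aset lam N E 0 a) + σ (Aset lam N E a b) = σ (Aset lam N E 0 b) := by
      rw [← measure_union hdisj (measurable_Aset lam hNc hE a b), hsplit]
    have ha' : σ (Aset lam N E 0 a) = ENNReal.ofReal (a ^ Q) * ν' E := by
      rcases eq_or_lt_of_le ha with h | h
      · rw [← h]
        have : Aset lam N E 0 0 = ∅ := by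
          rw [Aset]
          simp
        rw [this, measure_empty, Real.zero_rpow hQ.ne', ENNReal.ofReal_zero, zero_mul]
      · exact key1 E hE a h
    have hb' : σ (Aset lam N E 0 b) = ENNReal.ofReal (b ^ Q) * ν' E :=
      key1 E hE b (lt_of_le_of_lt ha hab)
    have hofadd : ENNReal.ofReal (a ^ Q) * ν' E + ENNReal.ofReal (b ^ Q - a ^ Q) * ν' E
        = ENNReal.ofReal (b ^ Q) * ν' E := by
      rw [← add_mul, ← ENNReal.ofReal_add (Real.rpow_nonneg ha Q)
        (sub_nonneg.2 (Real.rpow_le_rpow ha hab.le hQ.le)), add_sub_cancel]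
    rw [ha', hb', ← hofadd] at hsum
    have hfin : ENNReal.ofReal (a ^ Q) * ν' E ≠ ⊤ :=
      ENNReal.mul_ne_top ENNReal.ofReal_ne_top (hν'fin E)
    exact (ENNReal.add_right_inj hfin).1 hsum
  -- ρ computations
  have hρIoc : ∀ a b : ℝ, 0 ≤ a → a < b →
      ρ (Ioc a b) = ENNReal.ofReal ((b ^ Q - a ^ Q) / Q) := by
    intro a b ha hab
    rw [hρ_def, withDensity_apply _ measurableSet_Ioc,
      Measure.restrict_restrict measurableSet_Ioc]
    have hsub : Ioc a b ∩ Ioi 0 = Ioc a b :=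
      inter_eq_self_of_subset_left (fun t (ht : t ∈ Ioc a b) => lt_of_le_of_lt ha ht.1)
    rw [hsub]
    have hInt : Integrable (fun t : ℝ => t ^ (Q-1)) (volume.restrict (Ioc a b)) :=
      (intervalIntegral.intervalIntegrable_rpow' (by linarith)).1
    have hnn : 0 ≤ᵐ[volume.restrict (Ioc a b)] (fun t : ℝ => t ^ (Q-1)) :=
      (ae_restrict_mem measurableSet_Ioc).mono fun t ht =>
        Real.rpow_nonneg (le_trans ha ht.1.le) _
    rw [← MeasureTheory.ofReal_integral_eq_lintegral_ofReal hInt hnn]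
    congr 1
    rw [← intervalIntegral.integral_of_le hab.le,
      integral_rpow (Or.inl (by linarith : (-1:ℝ) < Q - 1))]
    have hQ1 : Q - 1 + 1 = Q := by ring
    rw [hQ1]
  have hρshift : ∀ a b : ℝ, ρ (Ioc a b) = ρ (Ioc (a ⊔ 0) b) := by
    intro a b
    rw [hρ_def, withDensity_apply _ measurableSet_Ioc, withDensity_apply _ measurableSet_Ioc,
      Measure.restrict_restrict measurableSet_Ioc,
      Measure.restrict_restrict measurableSet_Ioc]
    congr 2
    ext t
    simp only [mem_inter_iff, mem_Ioc, mem_Ioi, sup_lt_iff]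
    tauto
  have hρne : ∀ a b : ℝ, ρ (Ioc a b) ≠ ⊤ := by
    intro a b
    rw [hρshift a b]
    rcases lt_or_ge (a ⊔ 0) b with h | h
    · rw [hρIoc _ b le_sup_right h]
      exact ENNReal.ofReal_ne_top
    · rw [Ioc_eq_empty (not_lt.2 h), measure_empty]
      exact ENNReal.zero_ne_top
  -- spanning sets for ρ
  set D : Set (Set ℝ) := {S : Set ℝ | ∃ l u : ℝ, l < u ∧ Ioc l u = S} with hD_def
  have hD_gen : MeasurableSpace.generateFrom D = (inferInstance : MeasurableSpace ℝ) :=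
    (borel_eq_generateFrom_Ioc ℝ).symm.trans (BorelSpace.measurable_eq (α := ℝ)).symm
  have hD_pi : IsPiSystem D := by
    rintro S₁ ⟨l₁, u₁, h₁, rfl⟩ S₂ ⟨l₂, u₂, h₂, rfl⟩ hne
    rw [Ioc_inter_Ioc] at hne ⊢
    exact ⟨l₁ ⊔ l₂, u₁ ⊓ u₂, nonempty_Ioc.1 hne, rfl⟩
  have h3D : ρ.FiniteSpanningSetsIn D := by
    refine ⟨fun k => Ioc (-(k+1 : ℝ)) (k+1 : ℝ), fun k => ⟨-(k+1 : ℝ), (k+1 : ℝ), by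
      have : (0:ℝ) ≤ (k:ℝ) := Nat.cast_nonneg k
      linarith, rfl⟩, fun k => (hρne _ _).lt_top, ?_⟩
    ext x
    simp only [mem_iUnion, mem_Ioc, mem_univ, iff_true]
    obtain ⟨k, hk⟩ := exists_nat_ge |x|
    refine ⟨k, ?_, ?_⟩
    · have := neg_abs_le x
      linarith
    · have := le_abs_self x
      linarith
  haveI hρsf : SigmaFinite ρ := h3D.sigmaFinite
  -- agreement on rectangles
  have h₁ : ∀ E ∈ {s : Set (Fin n → ℝ) | MeasurableSet s}, ∀ S ∈ D,
      (Measure.map Φ (σ.restrict U)) (E ×ˢ S) = τ' E * ρ S := by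
    rintro E hEmem S ⟨a, b, hab, rfl⟩
    have hE : MeasurableSet E := hEmem
    rw [Measure.map_apply hΦ (hE.prod measurableSet_Ioc),
      Measure.restrict_apply (hΦ (hE.prod measurableSet_Ioc))]
    have hpre : Φ ⁻¹' (E ×ˢ Ioc a b) = pol lam N ⁻¹' E ∩ N ⁻¹' Ioc a b :=
      Set.mk_preimage_prod _ _
    have hSI : (pol lam N ⁻¹' E ∩ N ⁻¹' Ioc a b) ∩ U = Aset lam N E (a ⊔ 0) b := by
      ext x
      simp only [Aset, mem_inter_iff, mem_preimage, mem_Ioc, hU_def, mem_compl_iff,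
        mem_singleton_iff, sup_lt_iff]
      constructor
      · rintro ⟨⟨hxE, hN1, hN2⟩, hx0⟩
        exact ⟨hxE, ⟨hN1, N_pos hNnn hNz hx0⟩, hN2⟩
      · rintro ⟨hxE, ⟨hN1, hN0⟩, hN2⟩
        refine ⟨⟨hxE, hN1, hN2⟩, ?_⟩
        intro h0
        rw [h0, (hNz 0).2 rfl] at hN0
        exact lt_irrefl 0 hN0
    rw [hpre, hSI, hρshift a b, hτ'app E hE]
    rcases lt_or_ge (a ⊔ 0) b with h | h
    · rw [key2 E hE _ b le_sup_right h, hρIoc _ b le_sup_right h]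
      have harr : Q * ((b ^ Q - (a ⊔ 0) ^ Q) / Q) = b ^ Q - (a ⊔ 0) ^ Q := by
        field_simp
      conv_rhs => rw [mul_right_comm]
      rw [← ENNReal.ofReal_mul hQ.le, harr]
    · have hempty : Aset lam N E (a ⊔ 0) b = ∅ := by
        rw [Aset, Ioc_eq_empty (not_lt.2 h)]
        simp
      rw [hempty, measure_empty, Ioc_eq_empty (not_lt.2 h), measure_empty, mul_zero]
  -- the product measure identification
  have hPM : τ'.prod ρ = Measure.map Φ (σ.restrict U) :=
    Measure.prod_eq_generateFrom MeasurableSpace.generateFrom_measurableSet hD_gen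
      MeasurableSpace.isPiSystem_measurableSet hD_pi (τ'.toFiniteSpanningSetsIn) h3D h₁
  -- σ as an image measure
  have hae : ∀ᵐ x ∂σ, x ∈ U := by
    rw [ae_iff]
    have hcompl : {x : Fin n → ℝ | ¬ x ∈ U} = {0} := by
      ext x
      simp [hU_def]
    rw [hcompl]
    exact σ0
  have hres : σ.restrict U = σ := Measure.restrict_eq_self_of_ae_mem hae
  have hTΦ : T ∘ Φ =ᵐ[σ.restrict U] id := by
    filter_upwards [ae_restrict_mem hUmeas] with x hx
    have hx0 : x ≠ 0 := by simpa [hU_def] using hx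
    show T (Φ x) = x
    exact dil_pol hNnn hNz hx0
  have hσmap : σ = Measure.map T (τ'.prod ρ) := by
    calc σ = σ.restrict U := hres.symm
      _ = Measure.map (T ∘ Φ) (σ.restrict U) := by
          rw [Measure.map_congr hTΦ, Measure.map_id]
      _ = Measure.map T (Measure.map Φ (σ.restrict U)) := (Measure.map_map hT hΦ).symm
      _ = Measure.map T (τ'.prod ρ) := by rw [← hPM]
  -- the measure on the sphere
  have hτ'null : τ' ({x : Fin n → ℝ | N x = 1})ᶜ = 0 := by
    rw [hτ'_def, Measure.smul_apply, smul_eq_mul, Measure.map_apply hπ hSmeas.compl,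
      Measure.restrict_apply (hπ hSmeas.compl)]
    have hempty : pol lam N ⁻¹' ({x : Fin n → ℝ | N x = 1})ᶜ ∩ Aset lam N univ 0 1 = ∅ := by
      ext x
      simp only [mem_inter_iff, mem_preimage, mem_compl_iff, mem_setOf_eq, Aset,
        mem_empty_iff_false, iff_false, mem_Ioc]
      rintro ⟨hxne, -, hxN⟩
      exact hxne (N_pol hNh' hxN.1)
    rw [hempty, measure_empty, mul_zero]
  have hemb : MeasurableEmbedding ((↑) : {x : Fin n → ℝ // N x = 1} → (Fin n → ℝ)) :=
    MeasurableEmbedding.subtype_coe hSmeas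
  set τ : Measure {x : Fin n → ℝ // N x = 1} := Measure.comap (↑) τ' with hτ_def
  have hmapτ : Measure.map ((↑) : {x : Fin n → ℝ // N x = 1} → (Fin n → ℝ)) τ = τ' := by
    rw [hτ_def, hemb.map_comap, Subtype.range_coe_subtype]
    refine Measure.restrict_eq_self_of_ae_mem ?_
    rw [ae_iff]
    exact hτ'null
  haveI hτfin : IsFiniteMeasure τ := by
    constructor
    rw [hτ_def, hemb.comap_apply]
    exact lt_of_le_of_lt (measure_mono (subset_univ _)) (measure_lt_top τ' univ)
  haveI hcs : CompactSpace {x : Fin n → ℝ // N x = 1} := isCompact_iff_compactSpace.1 hScompact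
  haveI hbs : BorelSpace {x : Fin n → ℝ // N x = 1} := Subtype.borelSpace {x | N x = 1}
  haveI hwr : τ.WeaklyRegular := inferInstance
  have hτreg : τ.Regular :=
    { lt_top_of_isCompact := fun _K _hK => measure_lt_top τ _K
      toOuterRegular := inferInstance
      innerRegular := fun UU hUU r hr => by
        obtain ⟨F, hFU, hFc, hFr⟩ := hwr.innerRegular hUU r hr
        exact ⟨F, hFU, hFc.isCompact, hFr⟩ }
  refine ⟨τ, hτreg, ?_⟩
  intro f hf
  have hfT : Measurable fun p : (Fin n → ℝ) × ℝ => f (T p) := hf.comp hT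
  rw [hσmap, lintegral_map hf hT, MeasureTheory.lintegral_prod _ hfT.aemeasurable]
  have hinner : ∀ x : Fin n → ℝ, (∫⁻ t, f (T (x, t)) ∂ρ)
      = ∫⁻ t in Ioi (0:ℝ), f (dil lam t x) * ENNReal.ofReal (t ^ (Q-1)) := by
    intro x
    have hdens : Measurable fun t : ℝ => ENNReal.ofReal (t ^ (Q-1)) :=
      (measurable_id.pow measurable_const).ennreal_ofReal
    have hg : Measurable fun t : ℝ => f (T (x, t)) :=
      hf.comp (hT.comp (measurable_const.prodMk measurable_id))
    rw [hρ_def, lintegral_withDensity_eq_lintegral_mul _ hdens hg]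
    refine lintegral_congr fun t => ?_
    simp only [Pi.mul_apply]
    exact mul_comm _ _
  calc ∫⁻ x, ∫⁻ t, f (T (x, t)) ∂ρ ∂τ'
      = ∫⁻ x, (∫⁻ t in Ioi (0:ℝ), f (dil lam t x) * ENNReal.ofReal (t ^ (Q-1))) ∂τ' :=
        lintegral_congr hinner
    _ = ∫⁻ ω, (∫⁻ t in Ioi (0:ℝ),
          f (dil lam t (ω : Fin n → ℝ)) * ENNReal.ofReal (t ^ (Q-1))) ∂τ := by
        rw [← hmapτ, hemb.lintegral_map]
end

section
/- Let σ be a regular Borel measure on ℝ^n that is homogeneous of degree Q > 0 with respect to dilations δ_t (i.e. σ(δ_t A) = t^Q σ(A)), and finite on compact sets. Then σ is locally 1-bounded on ℝ^n∖{0}: for every compact K ⊆ ℝ^n∖{0} and every ε > 0 there exist constants C, r̄ > 0 such that σ(B(x,r)) ≤ C r^{1−ε} for all x ∈ K and 0 < r ≤ r̄, where B(x,r) denotes the Euclidean ball. -/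
open MeasureTheory Set
open scoped ENNReal

private lemma abs_lt_of_sq_lt_sq'' {a r : ℝ} (hr : 0 < r) (h : a ^ 2 < r ^ 2) : |a| < r := by
  rw [abs_lt]; constructor <;> nlinarith

/-- For `1 ≤ lam`, `1 ≤ a ≤ b` we have `b - a ≤ b^lam - a^lam`. -/
private lemma rpow_gap {l a b : ℝ} (hl : 1 ≤ l) (ha : 1 ≤ a) (hab : a ≤ b) :
    b - a ≤ b ^ l - a ^ l := by
  have ha0 : 0 < a := lt_of_lt_of_le one_pos ha
  have hb0 : 0 < b := lt_of_lt_of_le ha0 hab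
  have hba : 1 ≤ b / a := (one_le_div ha0).mpr hab
  have h1 : b / a ≤ (b / a) ^ l := by
    calc b / a = (b / a) ^ (1 : ℝ) := (Real.rpow_one _).symm
    _ ≤ (b / a) ^ l := Real.rpow_le_rpow_of_exponent_le hba hl
  have h2 : b ^ l = a ^ l * (b / a) ^ l := by
    rw [← Real.mul_rpow ha0.le (by positivity)]
    congr 1
    field_simp
  have h3 : a ^ l * (b / a) ≤ b ^ l := by
    rw [h2]
    exact mul_le_mul_of_nonneg_left h1 (Real.rpow_pos_of_pos ha0 l).le
  have h4 : a ^ l * (b / a) = a ^ l + a ^ l * (b - a) / a := by field_simp; ring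
  have h5 : b - a ≤ a ^ l * (b - a) / a := by
    have hq : 1 ≤ a ^ l / a := by
      rw [le_div_iff₀ ha0]
      calc 1 * a = a ^ (1 : ℝ) := by rw [one_mul, Real.rpow_one]
      _ ≤ a ^ l := Real.rpow_le_rpow_of_exponent_le ha hl
    have heq : a ^ l * (b - a) / a = (a ^ l / a) * (b - a) := by ring
    rw [heq]
    nlinarith [sub_nonneg.mpr hab]
  nlinarith [h3, h4, h5]

set_option maxHeartbeats 1600000 in
/-- A regular Borel measure on `ℝ^n`, homogeneous of degree `Q > 0` with respect to dilations
with exponents `λ_i ≥ 1` and finite on compact sets, is locally `1`-bounded on `ℝ^n ∖ {0}`: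
for every compact `K ⊆ ℝ^n ∖ {0}` and `ε > 0` there are `C, r̄ > 0` with
`σ(B(x,r)) ≤ C r^{1-ε}` for `x ∈ K` and `0 < r ≤ r̄` (Euclidean balls). -/
theorem homogeneous_measure_locally_one_bounded
    (n : ℕ) (lam : Fin n → ℝ) (hlam : ∀ i, 1 ≤ lam i)
    (σ : Measure (Fin n → ℝ)) (hreg : σ.Regular) (Q : ℝ) (hQ : 0 < Q)
    (hhom : ∀ t : ℝ, 0 < t → ∀ A : Set (Fin n → ℝ), MeasurableSet A →
      σ ((fun x => fun i => t ^ lam i * x i) '' A) = ENNReal.ofReal (t ^ Q) * σ A)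
    (hfin : ∀ K : Set (Fin n → ℝ), IsCompact K → σ K < ⊤) :
    ∀ K : Set (Fin n → ℝ), IsCompact K → (0 : Fin n → ℝ) ∉ K → ∀ ε : ℝ, 0 < ε →
      ∃ C : ℝ, 0 < C ∧ ∃ rb : ℝ, 0 < rb ∧ ∀ x ∈ K, ∀ r : ℝ, 0 < r → r ≤ rb →
        σ {y : Fin n → ℝ | ∑ i, (y i - x i) ^ 2 < r ^ 2} ≤
          ENNReal.ofReal (C * r ^ ((1 : ℝ) - ε)) := by
  intro K hK hK0 ε hε
  rcases K.eq_empty_or_nonempty with rfl | hKne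
  · exact ⟨1, one_pos, 1, one_pos, by simp⟩
  -- bound on K
  obtain ⟨R, hR0, hRK⟩ : ∃ R : ℝ, 0 ≤ R ∧ ∀ x ∈ K, ∀ i, |x i| ≤ R := by
    obtain ⟨R, hR⟩ := hK.isBounded.subset_closedBall 0
    refine ⟨max R 0, le_max_right _ _, fun x hx i => ?_⟩
    have h2 : dist (x i) ((0 : Fin n → ℝ) i) ≤ dist x 0 := dist_le_pi_dist x 0 i
    simp only [Pi.zero_apply, Real.dist_eq, sub_zero] at h2
    exact h2.trans ((Metric.mem_closedBall.mp (hR hx)).trans (le_max_left _ _))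
  -- distance from 0
  set δ0 := Metric.infDist 0 K with hδ0def
  have hδ0 : 0 < δ0 := by
    rw [hδ0def]
    exact (hK.isClosed.notMem_iff_infDist_pos hKne).mp hK0
  have hδK : ∀ x ∈ K, ∃ i, δ0 ≤ |x i| := by
    intro x hx
    by_contra h
    push_neg at h
    have hd : dist x 0 < δ0 := by
      rw [dist_pi_lt_iff hδ0]
      intro i
      simpa [Real.dist_eq] using h i
    have : δ0 ≤ dist x 0 := by
      rw [hδ0def, dist_comm]
      exact Metric.infDist_le_dist_of_mem hx
    linarith
  -- exponent bounds
  set Λ : ℝ := 1 + ∑ i, lam i with hΛdef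
  have hΛ1 : 1 ≤ Λ := by
    have : (0 : ℝ) ≤ ∑ i, lam i :=
      Finset.sum_nonneg fun i _ => le_trans zero_le_one (hlam i)
    simp [hΛdef]; linarith
  have hΛi : ∀ i, lam i ≤ Λ := by
    intro i
    have h1 : lam i ≤ ∑ j, lam j :=
      Finset.single_le_sum (fun j _ => le_trans zero_le_one (hlam j)) (Finset.mem_univ i)
    simp [hΛdef]; linarith
  set P : ℝ := (2 : ℝ) ^ Λ with hPdef
  have hP1 : 1 ≤ P := by
    calc (1 : ℝ) = (1 : ℝ) ^ Λ := (Real.one_rpow _).symm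
    _ ≤ (2 : ℝ) ^ Λ := Real.rpow_le_rpow zero_le_one one_le_two (by linarith)
  have hPt : ∀ t : ℝ, 1 ≤ t → t ≤ 2 → ∀ i, t ^ lam i ≤ P := by
    intro t h1 h2 i
    calc t ^ lam i ≤ (2 : ℝ) ^ lam i :=
          Real.rpow_le_rpow (le_trans zero_le_one h1) h2 (le_trans zero_le_one (hlam i))
    _ ≤ (2 : ℝ) ^ Λ := Real.rpow_le_rpow_of_exponent_le one_le_two (hΛi i)
  have hP0 : 0 < P := lt_of_lt_of_le one_pos hP1
  -- spacing constant
  set c : ℝ := 3 * P / δ0 with hcdef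
  have hc0 : 0 < c := by positivity
  refine ⟨((σ (Set.pi univ fun _ : Fin n => Icc (-(P * (R + 1))) (P * (R + 1)))).toReal + 1)
      * 2 * c, by positivity, min 1 (1 / (2 * c)), by positivity, ?_⟩
  set K' : Set (Fin n → ℝ) := Set.pi univ fun _ : Fin n => Icc (-(P * (R + 1))) (P * (R + 1))
    with hK'def
  have hK'cpt : IsCompact K' := isCompact_univ_pi fun _ => isCompact_Icc
  set m' : ℝ := (σ K').toReal with hm'def
  set C : ℝ := (m' + 1) * 2 * c with hCdef
  have hm'0 : 0 ≤ m' := ENNReal.toReal_nonneg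
  intro x hx r hr hrrb
  have hr1 : r ≤ 1 := hrrb.trans (min_le_left _ _)
  have hcr : c * r ≤ 1 / 2 := by
    have h1 : r ≤ 1 / (2 * c) := hrrb.trans (min_le_right _ _)
    calc c * r ≤ c * (1 / (2 * c)) := mul_le_mul_of_nonneg_left h1 hc0.le
    _ = 1 / 2 := by field_simp
  have hcr0 : 0 < c * r := by positivity
  -- the ball
  set B : Set (Fin n → ℝ) := {y | ∑ i, (y i - x i) ^ 2 < r ^ 2} with hBdef
  have hBopen : IsOpen B := by
    have hcont : Continuous fun y : Fin n → ℝ => ∑ i, (y i - x i) ^ 2 :=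
      continuous_finset_sum _ fun i _ => ((continuous_apply i).sub continuous_const).pow 2
    exact isOpen_lt hcont continuous_const
  have hBcoord : ∀ y ∈ B, ∀ i, |y i - x i| < r := by
    intro y hy i
    refine abs_lt_of_sq_lt_sq'' hr (lt_of_le_of_lt ?_ hy)
    exact Finset.single_le_sum (f := fun j => (y j - x j) ^ 2) (fun j _ => sq_nonneg _) (Finset.mem_univ i)
  -- number of disjoint dilates
  set N : ℕ := ⌈1 / (2 * (c * r))⌉₊ with hNdef
  have hlarge : 1 ≤ 1 / (2 * (c * r)) := by
    rw [le_one_div (by norm_num) (by positivity)]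
    linarith
  have hN1 : 1 ≤ N := Nat.one_le_ceil_iff.mpr (by positivity)
  have hNlb : 1 / (2 * (c * r)) ≤ (N : ℝ) := Nat.le_ceil _
  have hNub : (N : ℝ) < 1 / (2 * (c * r)) + 1 := Nat.ceil_lt_add_one (by positivity)
  -- dilation factors
  set tf : ℕ → ℝ := fun k => 1 + k * (c * r) with htf
  have htf1 : ∀ k : ℕ, 1 ≤ tf k := by
    intro k
    have : (0 : ℝ) ≤ k * (c * r) := by positivity
    simp [htf]; linarith
  have htf2 : ∀ k < N, tf k ≤ 2 := by
    intro k hk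
    have hkN : (k : ℝ) ≤ (N : ℝ) - 1 := by
      have : (k : ℝ) + 1 ≤ N := by exact_mod_cast hk
      linarith
    have h2 : ((N : ℝ) - 1) * (c * r) ≤ 1 / 2 := by
      have : (N : ℝ) - 1 < 1 / (2 * (c * r)) := by linarith
      calc ((N : ℝ) - 1) * (c * r) ≤ (1 / (2 * (c * r))) * (c * r) := by
            apply mul_le_mul_of_nonneg_right (le_of_lt this) hcr0.le
      _ = 1 / 2 := by field_simp
    have : (k : ℝ) * (c * r) ≤ 1 / 2 := by
      calc (k : ℝ) * (c * r) ≤ ((N : ℝ) - 1) * (c * r) :=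
            mul_le_mul_of_nonneg_right hkN hcr0.le
      _ ≤ 1 / 2 := h2
    simp only [htf]; linarith
  have htfpos : ∀ k : ℕ, 0 < tf k := fun k => lt_of_lt_of_le one_pos (htf1 k)
  -- the dilated sets
  set S : ℕ → Set (Fin n → ℝ) := fun k => (fun y => fun i => tf k ^ lam i * y i) '' B with hS
  have hSopen : ∀ k : ℕ, IsOpen (S k) := by
    intro k
    have hne : ∀ i, tf k ^ lam i ≠ 0 := fun i => (Real.rpow_pos_of_pos (htfpos k) _).ne'
    have himg : S k = (fun z : Fin n → ℝ => fun i => (tf k ^ lam i)⁻¹ * z i) ⁻¹' B := by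
      ext z
      simp only [hS, mem_image, mem_preimage]
      constructor
      · rintro ⟨y, hy, rfl⟩
        have : (fun i => (tf k ^ lam i)⁻¹ * (tf k ^ lam i * y i)) = y := by
          funext i; rw [inv_mul_cancel_left₀ (hne i)]
        rw [this]; exact hy
      · intro hz
        exact ⟨fun i => (tf k ^ lam i)⁻¹ * z i, hz, by
          funext i; rw [mul_inv_cancel_left₀ (hne i)]⟩
    rw [himg]
    exact hBopen.preimage (continuous_pi fun i => continuous_const.mul (continuous_apply i))
  have hSmeas : ∀ k : ℕ, σ (S k) = ENNReal.ofReal (tf k ^ Q) * σ B :=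
    fun k => hhom (tf k) (htfpos k) B hBopen.measurableSet
  -- coordinate with large absolute value
  obtain ⟨i0, hi0⟩ := hδK x hx
  -- disjointness
  have hdisj : (↑(Finset.range N) : Set ℕ).PairwiseDisjoint S := by
    have key : ∀ k j : ℕ, k < j → j < N → Disjoint (S k) (S j) := by
      intro k j hkj hjN
      rw [Set.disjoint_left]
      rintro z ⟨y, hy, hzy⟩ ⟨y', hy', hzy'⟩
      set a := tf k with ha
      set b := tf j with hb
      have ha1 : 1 ≤ a := htf1 k
      have hb1 : 1 ≤ b := htf1 j
      have hb2 : b ≤ 2 := htf2 j hjN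
      have ha2 : a ≤ 2 := le_trans (by
        simp only [ha, hb, htf]
        have : (k : ℝ) ≤ j := by exact_mod_cast hkj.le
        nlinarith) hb2
      have hgap : c * r ≤ b - a := by
        simp only [ha, hb, htf]
        have : (k : ℝ) + 1 ≤ j := by exact_mod_cast hkj
        nlinarith
      have hab : a ≤ b := by linarith [hcr0, hgap]
      -- coordinate estimates
      have hza : |z i0 - a ^ lam i0 * x i0| < P * r := by
        have hzi : z i0 = a ^ lam i0 * y i0 := by rw [← hzy]
        have : z i0 - a ^ lam i0 * x i0 = a ^ lam i0 * (y i0 - x i0) := by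
          rw [hzi]; ring
        rw [this, abs_mul, abs_of_pos (Real.rpow_pos_of_pos (htfpos k) _)]
        calc a ^ lam i0 * |y i0 - x i0| < a ^ lam i0 * r := by
              exact mul_lt_mul_of_pos_left (hBcoord y hy i0) (Real.rpow_pos_of_pos (htfpos k) _)
        _ ≤ P * r := mul_le_mul_of_nonneg_right (hPt a ha1 ha2 i0) hr.le
      have hzb : |z i0 - b ^ lam i0 * x i0| < P * r := by
        have hzi : z i0 = b ^ lam i0 * y' i0 := by rw [← hzy']
        have : z i0 - b ^ lam i0 * x i0 = b ^ lam i0 * (y' i0 - x i0) := by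
          rw [hzi]; ring
        rw [this, abs_mul, abs_of_pos (Real.rpow_pos_of_pos (htfpos j) _)]
        calc b ^ lam i0 * |y' i0 - x i0| < b ^ lam i0 * r := by
              exact mul_lt_mul_of_pos_left (hBcoord y' hy' i0) (Real.rpow_pos_of_pos (htfpos j) _)
        _ ≤ P * r := mul_le_mul_of_nonneg_right (hPt b hb1 hb2 i0) hr.le
      -- separation
      have hsep : 3 * P * r ≤ |b ^ lam i0 * x i0 - a ^ lam i0 * x i0| := by
        have h1 : b - a ≤ b ^ lam i0 - a ^ lam i0 := rpow_gap (hlam i0) ha1 hab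
        have h2 : |b ^ lam i0 * x i0 - a ^ lam i0 * x i0|
            = (b ^ lam i0 - a ^ lam i0) * |x i0| := by
          rw [← sub_mul, abs_mul, abs_of_nonneg (by linarith [hgap, hcr0.le] : 
            (0:ℝ) ≤ b ^ lam i0 - a ^ lam i0)]
        rw [h2]
        have h3 : (c * r) * δ0 ≤ (b ^ lam i0 - a ^ lam i0) * |x i0| := by
          apply mul_le_mul (by linarith) hi0 hδ0.le (by linarith [hcr0])
        have h4 : (c * r) * δ0 = 3 * P * r := by
          simp only [hcdef]; field_simp
        linarith
      have htri : |b ^ lam i0 * x i0 - a ^ lam i0 * x i0|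
          ≤ |z i0 - a ^ lam i0 * x i0| + |z i0 - b ^ lam i0 * x i0| := by
        have heq : b ^ lam i0 * x i0 - a ^ lam i0 * x i0
            = (z i0 - a ^ lam i0 * x i0) - (z i0 - b ^ lam i0 * x i0) := by ring
        rw [heq]
        exact abs_sub _ _
      nlinarith [hP0, hr]
    intro k hk j hj hkj
    simp only [Finset.coe_range, mem_Iio] at hk hj
    rcases lt_or_gt_of_ne hkj with h | h
    · exact key k j h hj
    · exact (key j k h hk).symm
  -- containment in the big compact set
  have hsub : ∀ k < N, S k ⊆ K' := by
    rintro k hk z ⟨y, hy, rfl⟩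
    rw [hK'def, Set.mem_univ_pi]
    intro i
    rw [Set.mem_Icc, ← abs_le]
    have hyb : |y i| ≤ R + 1 := by
      have h0 : |y i| ≤ |x i| + |y i - x i| := by
        calc |y i| = |x i + (y i - x i)| := by congr 1; ring
        _ ≤ |x i| + |y i - x i| := abs_add_le _ _
      have := hRK x hx i
      have := lt_of_lt_of_le (hBcoord y hy i) hr1
      linarith
    calc |tf k ^ lam i * y i| = tf k ^ lam i * |y i| := by
          rw [abs_mul, abs_of_pos (Real.rpow_pos_of_pos (htfpos k) _)]
    _ ≤ P * (R + 1) := mul_le_mul (hPt _ (htf1 k) (htf2 k hk) i) hyb (abs_nonneg _)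
          hP0.le
  -- measure chain
  have hmfin : σ K' ≠ ⊤ := (hfin K' hK'cpt).ne
  have hsum : σ (⋃ k ∈ Finset.range N, S k) = ∑ k ∈ Finset.range N, σ (S k) :=
    measure_biUnion_finset hdisj fun k _ => (hSopen k).measurableSet
  have hmain : (N : ℝ≥0∞) * σ B ≤ σ K' := by
    calc (N : ℝ≥0∞) * σ B = ∑ _k ∈ Finset.range N, σ B := by
          rw [Finset.sum_const, Finset.card_range, nsmul_eq_mul]
    _ ≤ ∑ k ∈ Finset.range N, σ (S k) := by
          refine Finset.sum_le_sum fun k _ => ?_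
          rw [hSmeas k]
          refine le_mul_of_one_le_left zero_le ?_
          rw [ENNReal.one_le_ofReal]
          calc (1 : ℝ) = (1 : ℝ) ^ Q := (Real.one_rpow _).symm
          _ ≤ tf k ^ Q := Real.rpow_le_rpow zero_le_one (htf1 k) hQ.le
    _ = σ (⋃ k ∈ Finset.range N, S k) := hsum.symm
    _ ≤ σ K' := measure_mono (Set.iUnion₂_subset fun k hk =>
          hsub k (Finset.mem_range.mp hk))
  have hNne : (N : ℝ≥0∞) ≠ 0 := by
    simp only [ne_eq, Nat.cast_eq_zero]
    omega
  have hNtop : (N : ℝ≥0∞) ≠ ⊤ := ENNReal.natCast_ne_top N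
  have hBle : σ B ≤ σ K' / (N : ℝ≥0∞) := by
    rw [ENNReal.le_div_iff_mul_le (Or.inl hNne) (Or.inl hNtop), mul_comm]
    exact hmain
  have hdivreal : σ K' / (N : ℝ≥0∞) = ENNReal.ofReal (m' / N) := by
    rw [ENNReal.ofReal_div_of_pos (by exact_mod_cast Nat.pos_of_ne_zero (by omega)),
      ENNReal.ofReal_natCast, hm'def, ENNReal.ofReal_toReal hmfin]
  have hNpos : (0 : ℝ) < N := by exact_mod_cast Nat.pos_of_ne_zero (by omega)
  have hfinal : m' / N ≤ C * r ^ ((1 : ℝ) - ε) := by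
    have h1 : 1 / (N : ℝ) ≤ 2 * (c * r) := by
      rw [one_div_le hNpos (by positivity)]
      exact hNlb
    have h2 : m' / N ≤ m' * (2 * (c * r)) := by
      rw [div_eq_mul_one_div]
      exact mul_le_mul_of_nonneg_left h1 hm'0
    have h3 : m' * (2 * (c * r)) ≤ C * r := by
      simp only [hCdef]
      nlinarith [hc0, hr]
    have h4 : C * r ≤ C * r ^ ((1 : ℝ) - ε) := by
      have hrle : r ^ (1 : ℝ) ≤ r ^ ((1 : ℝ) - ε) :=
        Real.rpow_le_rpow_of_exponent_ge hr hr1 (by linarith)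
      rw [Real.rpow_one] at hrle
      have hC0 : 0 ≤ C := by positivity
      exact mul_le_mul_of_nonneg_left hrle hC0
    linarith
  calc σ B ≤ σ K' / (N : ℝ≥0∞) := hBle
  _ = ENNReal.ofReal (m' / N) := hdivreal
  _ ≤ ENNReal.ofReal (C * r ^ ((1 : ℝ) - ε)) := ENNReal.ofReal_le_ofReal hfinal
end

section
/- Let m > 1 and b, σ, γ, R > 0 be real numbers. Then lim_{t→0^+} t^{−γ} ∫_R^∞ exp(−b (r^m / t)^{1/(m−1)}) e^{σ r} dr = 0. -/
open MeasureTheory Filter Set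

private lemma aux_rpow_exp_tendsto (γ α c : ℝ) (hγ : 0 < γ) (hα : 0 < α) (hc : 0 < c) :
    Tendsto (fun t : ℝ => t ^ (-γ) * Real.exp (-(c * t ^ (-α))))
      (nhdsWithin 0 (Ioi 0)) (nhds 0) := by
  have h1 : Tendsto (fun t : ℝ => t ^ (-α)) (nhdsWithin 0 (Ioi 0)) atTop := by
    have := (tendsto_rpow_atTop hα).comp tendsto_inv_nhdsGT_zero
    refine this.congr' ?_
    filter_upwards [self_mem_nhdsWithin] with t (ht : 0 < t)
    show (t⁻¹) ^ α = t ^ (-α)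
    rw [Real.inv_rpow ht.le, ← Real.rpow_neg ht.le]
  have h2 := tendsto_rpow_mul_exp_neg_mul_atTop_nhds_zero (γ / α) c hc
  have h3 := h2.comp h1
  refine h3.congr' ?_
  filter_upwards [self_mem_nhdsWithin] with t (ht : 0 < t)
  have : (t ^ (-α)) ^ (γ / α) = t ^ (-γ) := by
    rw [← Real.rpow_mul ht.le]
    congr 1
    field_simp
  simp only [Function.comp]
  rw [this, neg_mul]

/-- For `m > 1` and `b, σ, γ, R > 0`:
`lim_{t→0⁺} t^{-γ} ∫_R^∞ exp(-b (r^m / t)^{1/(m-1)}) e^{σ r} dr = 0`. -/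
theorem tendsto_weighted_gaussian_tail_zero
    (m b σ γ R : ℝ) (hm : 1 < m) (hb : 0 < b) (hσ : 0 < σ) (hγ : 0 < γ) (hR : 0 < R) :
    Tendsto (fun t : ℝ =>
        t ^ (-γ) *
          ∫ r in Ioi R, Real.exp (-(b * (r ^ m / t) ^ (1 / (m - 1)))) * Real.exp (σ * r))
      (nhdsWithin 0 (Ioi 0)) (nhds 0) := by
  set α : ℝ := 1 / (m - 1) with hα_def
  have hm1 : 0 < m - 1 := by linarith
  have hα : 0 < α := by positivity
  set c : ℝ := b * R ^ α with hc_def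
  have hc : 0 < c := by positivity
  -- the dominating function
  have key : Tendsto (fun t : ℝ => Real.exp (σ * R) *
      (t ^ (-γ) * Real.exp (-(c * R * t ^ (-α))))) (nhdsWithin 0 (Ioi 0)) (nhds 0) := by
    have := (aux_rpow_exp_tendsto γ α (c * R) hγ hα (by positivity)).const_mul
      (Real.exp (σ * R))
    simpa using this
  -- eventually c * t^(-α) ≥ σ + 1
  have h1 : Tendsto (fun t : ℝ => t ^ (-α)) (nhdsWithin 0 (Ioi 0)) atTop := by
    have := (tendsto_rpow_atTop hα).comp tendsto_inv_nhdsGT_zero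
    refine this.congr' ?_
    filter_upwards [self_mem_nhdsWithin] with t (ht : 0 < t)
    show (t⁻¹) ^ α = t ^ (-α)
    rw [Real.inv_rpow ht.le, ← Real.rpow_neg ht.le]
  have hev : ∀ᶠ t in nhdsWithin 0 (Ioi 0), σ + 1 ≤ c * t ^ (-α) :=
    (h1.const_mul_atTop hc).eventually_ge_atTop (σ + 1)
  refine squeeze_zero' ?_ ?_ key
  · filter_upwards [self_mem_nhdsWithin] with t (ht : 0 < t)
    exact mul_nonneg (Real.rpow_nonneg ht.le _)
      (integral_nonneg fun r => by positivity)
  · filter_upwards [self_mem_nhdsWithin, hev] with t (ht : 0 < t) hev1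
    have htα : 0 < t ^ (-α) := Real.rpow_pos_of_pos ht _
    -- pointwise bound on the integrand
    have hpt : ∀ r ∈ Ioi R,
        Real.exp (-(b * (r ^ m / t) ^ (1 / (m - 1)))) * Real.exp (σ * r)
          ≤ Real.exp ((σ + 1) * R - c * R * t ^ (-α)) * Real.exp (-r) := by
      intro r hr
      have hrR : R < r := hr
      have hr0 : 0 < r := hR.trans hrR
      rw [← Real.exp_add, ← Real.exp_add]
      apply Real.exp_le_exp.2
      have hcomp : (r ^ m / t) ^ (1 / (m - 1)) = r ^ (1 + α) * t ^ (-α) := by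
        rw [Real.div_rpow (Real.rpow_nonneg hr0.le _) ht.le,
          ← Real.rpow_mul hr0.le, div_eq_mul_inv, ← Real.rpow_neg ht.le, ← hα_def]
        congr 2
        rw [hα_def]
        field_simp
        ring
      rw [hcomp]
      have h5 : R ^ α * r ≤ r ^ (1 + α) := by
        have : r ^ (1 + α) = r * r ^ α := by
          rw [Real.rpow_add hr0, Real.rpow_one]
        rw [this]
        have : R ^ α ≤ r ^ α := Real.rpow_le_rpow hR.le hrR.le hα.le
        nlinarith
      have h6 : c * r * t ^ (-α) ≤ b * (r ^ (1 + α) * t ^ (-α)) := by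
        rw [hc_def]
        have := mul_le_mul_of_nonneg_right h5 htα.le
        nlinarith
      -- c * t^(-α) * (r - R) ≥ (σ+1) * (r - R)
      have h7 : (σ + 1) * (r - R) ≤ c * t ^ (-α) * (r - R) :=
        mul_le_mul_of_nonneg_right hev1 (by linarith)
      nlinarith
    -- integrability of the dominating function
    have hint : IntegrableOn
        (fun r : ℝ => Real.exp ((σ + 1) * R - c * R * t ^ (-α)) * Real.exp (-r)) (Ioi R) := by
      have h := (exp_neg_integrableOn_Ioi R one_pos).const_mul
        (Real.exp ((σ + 1) * R - c * R * t ^ (-α)))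
      simp only [neg_one_mul] at h
      exact h
    have hIle : (∫ r in Ioi R, Real.exp (-(b * (r ^ m / t) ^ (1 / (m - 1)))) * Real.exp (σ * r))
        ≤ ∫ r in Ioi R, Real.exp ((σ + 1) * R - c * R * t ^ (-α)) * Real.exp (-r) := by
      refine integral_mono_of_nonneg ?_ hint ?_
      · exact Eventually.of_forall fun r => by positivity
      · filter_upwards [ae_restrict_mem measurableSet_Ioi] with r hr using hpt r hr
    have hIval : (∫ r in Ioi R, Real.exp ((σ + 1) * R - c * R * t ^ (-α)) * Real.exp (-r))
        = Real.exp ((σ + 1) * R - c * R * t ^ (-α)) * Real.exp (-R) := by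
      rw [integral_const_mul, integral_exp_neg_Ioi]
    calc t ^ (-γ) * ∫ r in Ioi R,
          Real.exp (-(b * (r ^ m / t) ^ (1 / (m - 1)))) * Real.exp (σ * r)
        ≤ t ^ (-γ) * (Real.exp ((σ + 1) * R - c * R * t ^ (-α)) * Real.exp (-R)) := by
          rw [← hIval]
          exact mul_le_mul_of_nonneg_left hIle (Real.rpow_nonneg ht.le _)
      _ = Real.exp (σ * R) * (t ^ (-γ) * Real.exp (-(c * R * t ^ (-α)))) := by
          rw [← Real.exp_add, mul_left_comm, ← Real.exp_add]
          congr 1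
          congr 1
          ring
end

section
/- Let (X, μ) be a σ-finite measure space, 1 ≤ p < ∞, and (T_k)_{k∈ℕ} a sequence of bounded linear operators on L^p(X,μ). Suppose A > 0 is such that for every finite set I ⊆ ℕ and every choice of signs ε_k ∈ {−1, 1} (k ∈ I), the operator Σ_{k∈I} ε_k T_k has operator norm at most A on L^p(X,μ). Then there is a constant C_p, depending only on p, such that for all f ∈ L^p(X,μ): ‖(Σ_{k∈ℕ} |T_k f|²)^{1/2}‖_{L^p} ≤ C_p A ‖f‖_{L^p}. -/
open Finset

namespace SqFnAux

noncomputable def sg (J : Finset ℕ) (k : ℕ) : ℝ := if k ∈ J then 1 else -1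

noncomputable def S (a : ℕ → ℝ) (n : ℕ) (J : Finset ℕ) : ℝ :=
  ∑ k ∈ Finset.range n, sg J k * a k

lemma S_succ_of_subset (a : ℕ → ℝ) (n : ℕ) (J : Finset ℕ) (hJ : J ⊆ Finset.range n) :
    S a (n+1) J = S a n J - a n ∧ S a (n+1) (insert n J) = S a n J + a n := by
  have hnJ : n ∉ J := fun h => by simpa using hJ h
  have h1 : ∀ k ∈ Finset.range n, sg (insert n J) k = sg J k := by
    intro k hk
    have : k ≠ n := (Finset.mem_range.mp hk).ne
    simp [sg, Finset.mem_insert, this]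
  have hs : S a n (insert n J) = S a n J := Finset.sum_congr rfl fun k hk => by rw [h1 k hk]
  constructor
  · rw [S, Finset.sum_range_succ, ← S]
    simp [sg, hnJ]
    ring
  · rw [S, Finset.sum_range_succ, ← S, hs]
    simp [sg]

lemma sum_sq (a : ℕ → ℝ) (n : ℕ) :
    ∑ J ∈ (Finset.range n).powerset, (S a n J) ^ 2
      = 2 ^ n * ∑ k ∈ Finset.range n, (a k) ^ 2 := by
  induction n with
  | zero => simp [S]
  | succ n ih =>
    rw [Finset.range_add_one, Finset.sum_powerset_insert (by simp)]
    have key : ∀ J ∈ (Finset.range n).powerset,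
        (S a (n+1) J)^2 + (S a (n+1) (insert n J))^2 = 2 * (S a n J)^2 + 2 * (a n)^2 := by
      intro J hJ
      obtain ⟨h1, h2⟩ := S_succ_of_subset a n J (Finset.mem_powerset.mp hJ)
      rw [h1, h2]; ring
    rw [← Finset.sum_add_distrib, Finset.sum_congr rfl key, Finset.sum_add_distrib,
      ← Finset.mul_sum, ih, Finset.sum_const, Finset.card_powerset, Finset.card_range,
      Finset.sum_insert (by simp), nsmul_eq_mul]
    push_cast
    ring

lemma sum_pow4 (a : ℕ → ℝ) (n : ℕ) :
    ∑ J ∈ (Finset.range n).powerset, (S a n J) ^ 4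
      ≤ 3 * 2 ^ n * (∑ k ∈ Finset.range n, (a k) ^ 2) ^ 2 := by
  induction n with
  | zero => simp [S]
  | succ n ih =>
    rw [Finset.range_add_one, Finset.sum_powerset_insert (by simp)]
    have key : ∀ J ∈ (Finset.range n).powerset,
        (S a (n+1) J)^4 + (S a (n+1) (insert n J))^4
          = 2 * (S a n J)^4 + 12 * (S a n J)^2 * (a n)^2 + 2 * (a n)^4 := by
      intro J hJ
      obtain ⟨h1, h2⟩ := S_succ_of_subset a n J (Finset.mem_powerset.mp hJ)
      rw [h1, h2]; ring
    rw [← Finset.sum_add_distrib, Finset.sum_congr rfl key]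
    have e1 : ∑ J ∈ (Finset.range n).powerset,
        (2 * (S a n J)^4 + 12 * (S a n J)^2 * (a n)^2 + 2 * (a n)^4)
        = 2 * (∑ J ∈ (Finset.range n).powerset, (S a n J)^4)
          + 12 * (a n)^2 * (2 ^ n * ∑ k ∈ Finset.range n, (a k)^2)
          + 2 ^ n * (2 * (a n)^4) := by
    -- expand
      rw [Finset.sum_add_distrib, Finset.sum_add_distrib, ← Finset.mul_sum,
        Finset.sum_const, Finset.card_powerset, Finset.card_range]
      have : ∑ J ∈ (Finset.range n).powerset, 12 * (S a n J)^2 * (a n)^2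
          = 12 * (a n)^2 * ∑ J ∈ (Finset.range n).powerset, (S a n J)^2 := by
        rw [Finset.mul_sum]; exact Finset.sum_congr rfl fun J _ => by ring
      rw [this, sum_sq]
      push_cast; ring
    rw [e1]
    have hQ : (0:ℝ) ≤ ∑ k ∈ Finset.range n, (a k)^2 :=
      Finset.sum_nonneg fun k _ => sq_nonneg _
    have h2n : (0:ℝ) < 2 ^ n := by positivity
    rw [Finset.sum_insert (by simp), pow_succ 2 n]
    nlinarith [ih, mul_nonneg h2n.le (by positivity : (0:ℝ) ≤ a n ^ 4),
      mul_nonneg h2n.le (mul_nonneg hQ (sq_nonneg (a n)))]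

end SqFnAux

namespace SqFnAux

lemma sqrt_le (a : ℕ → ℝ) (n : ℕ) :
    Real.sqrt (∑ k ∈ Finset.range n, a k ^ 2)
      ≤ Real.sqrt 3 * (((2:ℝ) ^ n)⁻¹ * ∑ J ∈ (Finset.range n).powerset, |S a n J|) := by
  set Q := ∑ k ∈ Finset.range n, a k ^ 2 with hQdef
  have hQ : 0 ≤ Q := Finset.sum_nonneg fun k _ => sq_nonneg _
  set u := ∑ J ∈ (Finset.range n).powerset, |S a n J| with hu
  have hu0 : 0 ≤ u := Finset.sum_nonneg fun J _ => abs_nonneg _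
  set t := (2:ℝ) ^ n with ht
  have ht0 : (0:ℝ) < t := by positivity
  rcases eq_or_lt_of_le hQ with h0 | hQpos
  · rw [← h0, Real.sqrt_zero]
    positivity
  set m3 := ∑ J ∈ (Finset.range n).powerset, |S a n J| ^ 3 with hm3
  have hM2 : ∑ J ∈ (Finset.range n).powerset, (S a n J) ^ 2 = t * Q := sum_sq a n
  have hM4 : ∑ J ∈ (Finset.range n).powerset, (S a n J) ^ 4 ≤ 3 * t * Q ^ 2 := sum_pow4 a n
  have cs1 : (t * Q) ^ 2 ≤ u * m3 := by
    have h := Finset.sum_mul_sq_le_sq_mul_sq (Finset.range n).powerset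
      (fun J => Real.sqrt |S a n J|) (fun J => |S a n J| * Real.sqrt |S a n J|)
    have e1 : ∀ J ∈ (Finset.range n).powerset,
        Real.sqrt |S a n J| * (|S a n J| * Real.sqrt |S a n J|) = (S a n J) ^ 2 := by
      intro J _
      rw [← mul_assoc, mul_comm (Real.sqrt |S a n J|) (|S a n J|), mul_assoc,
        Real.mul_self_sqrt (abs_nonneg _), ← sq_abs]
      ring
    have e2 : ∀ J ∈ (Finset.range n).powerset,
        (Real.sqrt |S a n J|) ^ 2 = |S a n J| := fun J _ => Real.sq_sqrt (abs_nonneg _)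
    have e3 : ∀ J ∈ (Finset.range n).powerset,
        (|S a n J| * Real.sqrt |S a n J|) ^ 2 = |S a n J| ^ 3 := by
      intro J _
      rw [mul_pow, Real.sq_sqrt (abs_nonneg _)]
      ring
    rw [Finset.sum_congr rfl e1, Finset.sum_congr rfl e2, Finset.sum_congr rfl e3, hM2] at h
    exact h
  have cs2 : m3 ^ 2 ≤ (t * Q) * (3 * t * Q ^ 2) := by
    have h := Finset.sum_mul_sq_le_sq_mul_sq (Finset.range n).powerset
      (fun J => |S a n J|) (fun J => (S a n J) ^ 2)
    have e1 : ∀ J ∈ (Finset.range n).powerset,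
        |S a n J| * (S a n J) ^ 2 = |S a n J| ^ 3 := by
      intro J _
      rw [← sq_abs]; ring
    have e2 : ∀ J ∈ (Finset.range n).powerset, |S a n J| ^ 2 = (S a n J) ^ 2 :=
      fun J _ => sq_abs _
    have e3 : ∀ J ∈ (Finset.range n).powerset,
        ((S a n J) ^ 2) ^ 2 = (S a n J) ^ 4 := fun J _ => by ring
    rw [Finset.sum_congr rfl e1, Finset.sum_congr rfl e2, Finset.sum_congr rfl e3, hM2] at h
    refine h.trans ?_
    exact mul_le_mul_of_nonneg_left hM4 (by positivity)
  have h3 : (t * Q) ^ 4 ≤ u ^ 2 * ((t * Q) * (3 * t * Q ^ 2)) := by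
    have h1 : ((t * Q) ^ 2) ^ 2 ≤ (u * m3) ^ 2 :=
      pow_le_pow_left₀ (by positivity) cs1 2
    have hm30 : 0 ≤ m3 := Finset.sum_nonneg fun J _ => by positivity
    calc (t * Q) ^ 4 = ((t * Q) ^ 2) ^ 2 := by ring
      _ ≤ (u * m3) ^ 2 := h1
      _ = u ^ 2 * m3 ^ 2 := by ring
      _ ≤ u ^ 2 * ((t * Q) * (3 * t * Q ^ 2)) :=
          mul_le_mul_of_nonneg_left cs2 (by positivity)
  have hdiv : t ^ 2 * Q ≤ 3 * u ^ 2 := by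
    nlinarith [h3, mul_pos (mul_pos ht0 ht0) (pow_pos hQpos 3)]
  have key2 : (t * Real.sqrt Q) ^ 2 ≤ (Real.sqrt 3 * u) ^ 2 := by
    rw [mul_pow, mul_pow, Real.sq_sqrt hQ, Real.sq_sqrt (by norm_num : (3:ℝ) ≥ 0).le]
    linarith [hdiv]
  have key3 : t * Real.sqrt Q ≤ Real.sqrt 3 * u := by
    have h1 : 0 ≤ t * Real.sqrt Q := by positivity
    have h2 : 0 ≤ Real.sqrt 3 * u := by positivity
    nlinarith [key2, h1, h2]
  have h4 : Real.sqrt Q ≤ t⁻¹ * (Real.sqrt 3 * u) := by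
    rw [inv_mul_eq_div, le_div_iff₀ ht0]
    linarith [key3]
  calc Real.sqrt Q ≤ t⁻¹ * (Real.sqrt 3 * u) := h4
    _ = Real.sqrt 3 * (t⁻¹ * u) := by ring

end SqFnAux

namespace SqFnAux

lemma pointwise_bound (a : ℕ → ℝ) (n : ℕ) {pr : ℝ} (hpr : 1 ≤ pr) :
    Real.sqrt (∑ k ∈ Finset.range n, a k ^ 2) ^ pr
      ≤ Real.sqrt 3 ^ pr *
        (((2:ℝ) ^ n)⁻¹ * ∑ J ∈ (Finset.range n).powerset, |S a n J| ^ pr) := by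
  have hpr0 : 0 ≤ pr := by linarith
  have h1 := sqrt_le a n
  have ht0 : (0:ℝ) < (2:ℝ) ^ n := by positivity
  have h2 : Real.sqrt (∑ k ∈ Finset.range n, a k ^ 2) ^ pr
      ≤ (Real.sqrt 3 * (((2:ℝ) ^ n)⁻¹ * ∑ J ∈ (Finset.range n).powerset, |S a n J|)) ^ pr :=
    Real.rpow_le_rpow (Real.sqrt_nonneg _) h1 hpr0
  have hsum0 : 0 ≤ ∑ J ∈ (Finset.range n).powerset, |S a n J| :=
    Finset.sum_nonneg fun J _ => abs_nonneg _
  rw [Real.mul_rpow (Real.sqrt_nonneg _) (by positivity)] at h2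
  refine h2.trans ?_
  refine mul_le_mul_of_nonneg_left ?_ (Real.rpow_nonneg (Real.sqrt_nonneg _) _)
  -- power-mean inequality with uniform weights
  have hw : ∀ J ∈ (Finset.range n).powerset, (0:ℝ) ≤ ((2:ℝ) ^ n)⁻¹ := fun _ _ => by positivity
  have hw' : ∑ _J ∈ (Finset.range n).powerset, ((2:ℝ) ^ n)⁻¹ = 1 := by
    rw [Finset.sum_const, Finset.card_powerset, Finset.card_range, nsmul_eq_mul]
    push_cast
    exact mul_inv_cancel₀ ht0.ne'
  have hz : ∀ J ∈ (Finset.range n).powerset, (0:ℝ) ≤ |S a n J| := fun J _ => abs_nonneg _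
  have hpm := Real.rpow_arith_mean_le_arith_mean_rpow (Finset.range n).powerset
    (fun _ => ((2:ℝ) ^ n)⁻¹) (fun J => |S a n J|) hw hw' hz hpr
  simp only [← Finset.mul_sum] at hpm
  exact hpm

end SqFnAux

open MeasureTheory
open scoped ENNReal

universe u

namespace SqFnAux

lemma coeFn_smul_sum {X : Type u} [MeasurableSpace X] {μ : Measure X} {p : ℝ≥0∞}
    [Fact (1 ≤ p)] (s : Finset ℕ) (c : ℕ → ℝ) (g : ℕ → Lp ℝ p μ) :
    ⇑(∑ k ∈ s, c k • g k) =ᵐ[μ] fun x => ∑ k ∈ s, c k * (g k : X → ℝ) x := by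
  classical
  induction s using Finset.induction with
  | empty => simp only [Finset.sum_empty]; exact Lp.coeFn_zero (E := ℝ) (p := p) (μ := μ)
  | @insert i s hi ih =>
    rw [Finset.sum_insert hi]
    filter_upwards [Lp.coeFn_add (c i • g i) (∑ k ∈ s, c k • g k),
      Lp.coeFn_smul (c i) (g i), ih] with x h1 h2 h3
    simp only [Finset.sum_insert hi, h1, Pi.add_apply, h2, Pi.smul_apply, smul_eq_mul, h3]

end SqFnAux

/-- Khinchin-type square-function estimate. -/
theorem square_function_estimate_of_uniform_signed_sums
    (p : ℝ≥0∞) [Fact (1 ≤ p)] (hp : p ≠ ⊤) :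
    ∃ C : ℝ, 0 < C ∧
      ∀ (X : Type u) [MeasurableSpace X] (μ : Measure X) [SigmaFinite μ]
        (T : ℕ → Lp ℝ p μ →L[ℝ] Lp ℝ p μ) (A : ℝ), 0 < A →
        (∀ (I : Finset ℕ) (ε : ℕ → ℝ), (∀ k, ε k = 1 ∨ ε k = -1) →
          ‖∑ k ∈ I, ε k • T k‖ ≤ A) →
        ∀ f : Lp ℝ p μ,
          eLpNorm (fun x => Real.sqrt (∑' k, ((T k f : X → ℝ) x) ^ 2)) p μ ≤
            ENNReal.ofReal (C * A) * eLpNorm (f : X → ℝ) p μ := by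
  have hone : 1 ≤ p := Fact.out
  have hp0 : p ≠ 0 := by
    intro h; rw [h] at hone; simp at hone
  refine ⟨Real.sqrt 3, Real.sqrt_pos.mpr (by norm_num), ?_⟩
  intro X _ μ _ T A hA hbound f
  set pr := p.toReal with hprdef
  have hpr1 : 1 ≤ pr := by
    have := ENNReal.toReal_mono hp hone
    simpa using this
  have hpr0 : 0 < pr := lt_of_lt_of_le one_pos hpr1
  have ha : ∀ k, AEMeasurable (fun x => (T k f : X → ℝ) x) μ :=
    fun k => (Lp.aestronglyMeasurable (T k f)).aemeasurable
  -- measurability of the signed sums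
  have hSmeas : ∀ n (J : Finset ℕ),
      AEMeasurable (fun x => SqFnAux.S (fun k => (T k f : X → ℝ) x) n J) μ := by
    intro n J
    exact Finset.aemeasurable_fun_sum _ fun k _ => (ha k).const_mul _
  -- the single-sign-pattern estimate
  have hS : ∀ n (J : Finset ℕ),
      ∫⁻ x, ENNReal.ofReal (|SqFnAux.S (fun k => (T k f : X → ℝ) x) n J| ^ pr) ∂μ
        ≤ (ENNReal.ofReal A * eLpNorm (f : X → ℝ) p μ) ^ pr := by
    intro n J
    set G : Lp ℝ p μ := (∑ k ∈ Finset.range n, SqFnAux.sg J k • T k) f with hG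
    have hGsum : G = ∑ k ∈ Finset.range n, SqFnAux.sg J k • (T k f) := by
      rw [hG]
      simp [ContinuousLinearMap.sum_apply]
    have hae : (fun x => SqFnAux.S (fun k => (T k f : X → ℝ) x) n J) =ᵐ[μ] ⇑G := by
      rw [hGsum]
      filter_upwards [SqFnAux.coeFn_smul_sum (Finset.range n)
        (fun k => SqFnAux.sg J k) (fun k => T k f)] with x hx
      rw [hx]
      rfl
    have heq : ∀ x, ENNReal.ofReal (|SqFnAux.S (fun k => (T k f : X → ℝ) x) n J| ^ pr)
        = (‖SqFnAux.S (fun k => (T k f : X → ℝ) x) n J‖₊ : ℝ≥0∞) ^ pr := by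
      intro x
      rw [← enorm_eq_nnnorm, Real.enorm_eq_ofReal_abs, ENNReal.ofReal_rpow_of_nonneg (abs_nonneg _) hpr0.le]
    calc ∫⁻ x, ENNReal.ofReal (|SqFnAux.S (fun k => (T k f : X → ℝ) x) n J| ^ pr) ∂μ
        = ∫⁻ x, (‖SqFnAux.S (fun k => (T k f : X → ℝ) x) n J‖₊ : ℝ≥0∞) ^ pr ∂μ := by
          simp_rw [heq]
      _ = (eLpNorm (fun x => SqFnAux.S (fun k => (T k f : X → ℝ) x) n J) p μ) ^ pr := by
          simp only [← enorm_eq_nnnorm]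
          rw [eLpNorm_eq_lintegral_rpow_enorm_toReal hp0 hp, ← ENNReal.rpow_mul, one_div,
            inv_mul_cancel₀ hpr0.ne', ENNReal.rpow_one]
      _ ≤ (ENNReal.ofReal A * eLpNorm (f : X → ℝ) p μ) ^ pr := by
          refine ENNReal.rpow_le_rpow ?_ hpr0.le
          rw [eLpNorm_congr_ae hae]
          have h1 : eLpNorm (⇑G) p μ = ENNReal.ofReal ‖G‖ := by
            rw [Lp.norm_def, ENNReal.ofReal_toReal (Lp.eLpNorm_ne_top G)]
          rw [h1]
          have h2 : ‖G‖ ≤ A * ‖f‖ := by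
            have hb := hbound (Finset.range n) (SqFnAux.sg J) (fun k => by
              by_cases h : k ∈ J <;> simp [SqFnAux.sg, h])
            calc ‖G‖ ≤ ‖∑ k ∈ Finset.range n, SqFnAux.sg J k • T k‖ * ‖f‖ :=
                ContinuousLinearMap.le_opNorm _ f
              _ ≤ A * ‖f‖ := mul_le_mul_of_nonneg_right hb (norm_nonneg f)
          calc ENNReal.ofReal ‖G‖ ≤ ENNReal.ofReal (A * ‖f‖) := ENNReal.ofReal_le_ofReal h2
            _ = ENNReal.ofReal A * ENNReal.ofReal ‖f‖ := ENNReal.ofReal_mul hA.le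
            _ = ENNReal.ofReal A * eLpNorm (f : X → ℝ) p μ := by
                rw [Lp.norm_def, ENNReal.ofReal_toReal (Lp.eLpNorm_ne_top f)]
  set B := ENNReal.ofReal A * eLpNorm (f : X → ℝ) p μ with hB
  set g : ℕ → X → ℝ≥0∞ := fun n x =>
    ENNReal.ofReal (Real.sqrt (∑ k ∈ Finset.range n, ((T k f : X → ℝ) x) ^ 2) ^ pr) with hg
  have hmeasJ : ∀ n (J : Finset ℕ), AEMeasurable
      (fun x => ENNReal.ofReal (|SqFnAux.S (fun k => (T k f : X → ℝ) x) n J| ^ pr)) μ := by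
    intro n J
    exact ENNReal.measurable_ofReal.comp_aemeasurable
      (((Real.continuous_rpow_const hpr0.le).comp
        continuous_abs).measurable.comp_aemeasurable (hSmeas n J))
  have hcast2n : ∀ n : ℕ, ENNReal.ofReal (((2:ℝ) ^ n)⁻¹) = ((2 : ℝ≥0∞) ^ n)⁻¹ := by
    intro n
    rw [ENNReal.ofReal_inv_of_pos (by positivity), ENNReal.ofReal_pow (by norm_num)]
    norm_num
  have hn : ∀ n : ℕ,
      ∫⁻ x, g n x ∂μ ≤ (ENNReal.ofReal (Real.sqrt 3) * B) ^ pr := by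
    intro n
    have step1 : ∫⁻ x, g n x ∂μ
        ≤ ∫⁻ x, ENNReal.ofReal ((Real.sqrt 3 ^ pr * ((2:ℝ) ^ n)⁻¹) *
            ∑ J ∈ (Finset.range n).powerset,
              |SqFnAux.S (fun k => (T k f : X → ℝ) x) n J| ^ pr) ∂μ := by
      refine lintegral_mono fun x => ENNReal.ofReal_le_ofReal ?_
      have h := SqFnAux.pointwise_bound (fun k => (T k f : X → ℝ) x) n hpr1
      exact le_of_le_of_eq h (by ring)
    refine step1.trans ?_
    have step2 : ∀ x : X, ENNReal.ofReal ((Real.sqrt 3 ^ pr * ((2:ℝ) ^ n)⁻¹) *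
        ∑ J ∈ (Finset.range n).powerset,
          |SqFnAux.S (fun k => (T k f : X → ℝ) x) n J| ^ pr)
        = ENNReal.ofReal (Real.sqrt 3 ^ pr * ((2:ℝ) ^ n)⁻¹) *
          ∑ J ∈ (Finset.range n).powerset,
            ENNReal.ofReal (|SqFnAux.S (fun k => (T k f : X → ℝ) x) n J| ^ pr) := by
      intro x
      rw [ENNReal.ofReal_mul (by positivity),
        ENNReal.ofReal_sum_of_nonneg (fun J _ => by positivity)]
    simp_rw [step2]
    rw [lintegral_const_mul' _ _ ENNReal.ofReal_ne_top,
      lintegral_finset_sum' _ (fun J _ => hmeasJ n J)]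
    have hsum : ∑ J ∈ (Finset.range n).powerset,
        ∫⁻ x, ENNReal.ofReal (|SqFnAux.S (fun k => (T k f : X → ℝ) x) n J| ^ pr) ∂μ
        ≤ (2 : ℝ≥0∞) ^ n * B ^ pr := by
      refine (Finset.sum_le_sum fun J _ => hS n J).trans_eq ?_
      rw [Finset.sum_const, Finset.card_powerset, Finset.card_range, nsmul_eq_mul]
      norm_num
    calc ENNReal.ofReal (Real.sqrt 3 ^ pr * ((2:ℝ) ^ n)⁻¹) *
          ∑ J ∈ (Finset.range n).powerset,
            ∫⁻ x, ENNReal.ofReal (|SqFnAux.S (fun k => (T k f : X → ℝ) x) n J| ^ pr) ∂μ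
        ≤ ENNReal.ofReal (Real.sqrt 3 ^ pr * ((2:ℝ) ^ n)⁻¹) * ((2 : ℝ≥0∞) ^ n * B ^ pr) :=
          mul_le_mul_right hsum _
      _ = (ENNReal.ofReal (Real.sqrt 3) * B) ^ pr := by
          rw [ENNReal.ofReal_mul (by positivity),
            ← ENNReal.ofReal_rpow_of_nonneg (Real.sqrt_nonneg _) hpr0.le, hcast2n,
            ENNReal.mul_rpow_of_nonneg _ _ hpr0.le]
          rw [mul_assoc, ← mul_assoc (((2:ℝ≥0∞) ^ n)⁻¹),
            ENNReal.inv_mul_cancel (by positivity) (by simp), one_mul,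
            ENNReal.mul_rpow_of_nonneg _ _ hpr0.le, hB,
            ENNReal.mul_rpow_of_nonneg _ _ hpr0.le]
  -- pointwise comparison with the partial sums
  have hptwise : ∀ x : X,
      (‖Real.sqrt (∑' k, ((T k f : X → ℝ) x) ^ 2)‖₊ : ℝ≥0∞) ^ pr ≤ ⨆ n, g n x := by
    intro x
    rw [← enorm_eq_nnnorm, Real.enorm_eq_ofReal_abs, abs_of_nonneg (Real.sqrt_nonneg _),
      ENNReal.ofReal_rpow_of_nonneg (Real.sqrt_nonneg _) hpr0.le]
    by_cases hsum : Summable (fun k => ((T k f : X → ℝ) x) ^ 2)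
    · have htend := hsum.hasSum.tendsto_sum_nat
      have c1 : Continuous fun s : ℝ => ENNReal.ofReal (Real.sqrt s ^ pr) :=
        ENNReal.continuous_ofReal.comp
          ((Real.continuous_rpow_const hpr0.le).comp Real.continuous_sqrt)
      have := (c1.continuousAt.tendsto.comp htend : Filter.Tendsto (fun n => g n x)
        Filter.atTop (nhds (ENNReal.ofReal (Real.sqrt (∑' k, ((T k f : X → ℝ) x) ^ 2) ^ pr))))
      exact le_of_tendsto' this fun n => le_iSup (fun n => g n x) n
    · rw [tsum_eq_zero_of_not_summable hsum, Real.sqrt_zero, Real.zero_rpow hpr0.ne',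
        ENNReal.ofReal_zero]
      exact zero_le
  have hgmeas : ∀ n, AEMeasurable (g n) μ := by
    intro n
    have c1 : Continuous fun s : ℝ => ENNReal.ofReal (Real.sqrt s ^ pr) :=
      ENNReal.continuous_ofReal.comp
        ((Real.continuous_rpow_const hpr0.le).comp Real.continuous_sqrt)
    exact c1.measurable.comp_aemeasurable
      (Finset.aemeasurable_fun_sum _ fun k _ => (ha k).pow_const 2)
  have hgmono : ∀ᵐ x ∂μ, Monotone fun n => g n x := by
    refine Filter.Eventually.of_forall fun x m n hmn => ?_
    refine ENNReal.ofReal_le_ofReal (Real.rpow_le_rpow (Real.sqrt_nonneg _)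
      (Real.sqrt_le_sqrt ?_) hpr0.le)
    exact Finset.sum_le_sum_of_subset_of_nonneg
      (Finset.range_subset_range.mpr hmn) fun k _ _ => sq_nonneg _
  have hint : ∫⁻ x, (‖Real.sqrt (∑' k, ((T k f : X → ℝ) x) ^ 2)‖₊ : ℝ≥0∞) ^ pr ∂μ
      ≤ (ENNReal.ofReal (Real.sqrt 3) * B) ^ pr := by
    calc ∫⁻ x, (‖Real.sqrt (∑' k, ((T k f : X → ℝ) x) ^ 2)‖₊ : ℝ≥0∞) ^ pr ∂μ
        ≤ ∫⁻ x, ⨆ n, g n x ∂μ := lintegral_mono hptwise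
      _ = ⨆ n, ∫⁻ x, g n x ∂μ := lintegral_iSup' hgmeas hgmono
      _ ≤ (ENNReal.ofReal (Real.sqrt 3) * B) ^ pr := iSup_le hn
  have hfinal : eLpNorm (fun x => Real.sqrt (∑' k, ((T k f : X → ℝ) x) ^ 2)) p μ
      ≤ ENNReal.ofReal (Real.sqrt 3) * B := by
    rw [eLpNorm_eq_lintegral_rpow_enorm_toReal hp0 hp]
    simp only [enorm_eq_nnnorm]
    have h1 := ENNReal.rpow_le_rpow hint (by positivity : (0:ℝ) ≤ 1 / pr)
    rwa [← ENNReal.rpow_mul, mul_one_div, div_self hpr0.ne', ENNReal.rpow_one] at h1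
  refine hfinal.trans_eq ?_
  rw [hB, ENNReal.ofReal_mul (Real.sqrt_nonneg _), mul_assoc]
end

section
/- Let δ_t be dilations on ℝ^n with positive exponents, and let η : ℝ^n → [0,∞) be a continuous function whose support is a compact subset of ℝ^n∖{0}, such that ⋃_{t>0} δ_t({η ≠ 0}) = ℝ^n∖{0}. Then there exists a > 0 such that already the dyadic family covers: ⋃_{j∈ℤ} δ_{2^{a j}}({η ≠ 0}) = ℝ^n∖{0}. -/
open Set

namespace DyadicCoverAux

noncomputable def dil {n : ℕ} (lam : Fin n → ℝ) (s : ℝ) (x : Fin n → ℝ) : Fin n → ℝ :=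
  fun i => (2 : ℝ) ^ (s * lam i) * x i

lemma dil_dil {n : ℕ} (lam : Fin n → ℝ) (s t : ℝ) (x : Fin n → ℝ) :
    dil lam s (dil lam t x) = dil lam (s + t) x := by
  funext i
  simp only [dil]
  rw [add_mul, Real.rpow_add (by norm_num : (0:ℝ) < 2)]
  ring

lemma dil_zero {n : ℕ} (lam : Fin n → ℝ) (x : Fin n → ℝ) : dil lam 0 x = x := by
  funext i; simp [dil]

lemma continuous_dil {n : ℕ} (lam : Fin n → ℝ) :
    Continuous (fun p : ℝ × (Fin n → ℝ) => dil lam p.1 p.2) := by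
  apply continuous_pi
  intro i
  simp only [dil]
  have h2 : (fun p : ℝ × (Fin n → ℝ) => (2:ℝ) ^ (p.1 * lam i)) =
      fun p => Real.exp (Real.log 2 * (p.1 * lam i)) := by
    funext p; rw [Real.rpow_def_of_pos (by norm_num)]
  have hc : Continuous (fun p : ℝ × (Fin n → ℝ) => (2:ℝ) ^ (p.1 * lam i)) := by
    rw [h2]
    exact Real.continuous_exp.comp (continuous_const.mul (continuous_fst.mul continuous_const))
  exact hc.mul ((continuous_apply i).comp continuous_snd)

lemma dil_fun_eq {n : ℕ} (lam : Fin n → ℝ) (p : ℝ) :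
    (fun x : Fin n → ℝ => fun i => ((2:ℝ) ^ p) ^ lam i * x i) = dil lam p := by
  funext x i
  rw [dil, ← Real.rpow_mul (by norm_num : (0:ℝ) ≤ 2)]

end DyadicCoverAux

open DyadicCoverAux

set_option maxHeartbeats 1000000 in
/-- If `η ≥ 0` is continuous with compact support contained in `ℝ^n ∖ {0}` and the dilates
`δ_t({η ≠ 0})`, `t > 0`, cover `ℝ^n ∖ {0}`, then for some `a > 0` already the dyadic dilates
`δ_{2^{aj}}({η ≠ 0})`, `j ∈ ℤ`, cover `ℝ^n ∖ {0}`. -/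
theorem dyadic_dilates_cover
    (n : ℕ) (lam : Fin n → ℝ) (hlam : ∀ i, 0 < lam i)
    (η : (Fin n → ℝ) → ℝ) (hηc : Continuous η) (hηnn : ∀ x, 0 ≤ η x)
    (hηcpt : IsCompact (tsupport η)) (hη0 : (0 : Fin n → ℝ) ∉ tsupport η)
    (hcover :
      (⋃ t ∈ Ioi (0 : ℝ), (fun x => fun i => t ^ lam i * x i) '' {x | η x ≠ 0}) =
        {x : Fin n → ℝ | x ≠ 0}) :
    ∃ a : ℝ, 0 < a ∧
      (⋃ j : ℤ, (fun x => fun i => ((2 : ℝ) ^ (a * (j : ℝ))) ^ lam i * x i) ''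
          {x | η x ≠ 0}) =
        {x : Fin n → ℝ | x ≠ 0} := by
  classical
  set U : Set (Fin n → ℝ) := {x | η x ≠ 0} with hUdef
  have hUopen : IsOpen U := isOpen_compl_singleton.preimage hηc
  have hUK : U ⊆ tsupport η := subset_tsupport η
  -- Step A: every nonzero x can be moved into U by some dyadic-exponent dilation
  have hmove : ∀ x : Fin n → ℝ, x ≠ 0 → ∃ s : ℝ, dil lam s x ∈ U := by
    intro x hx
    have hxm : x ∈ (⋃ t ∈ Ioi (0 : ℝ), (fun x => fun i => t ^ lam i * x i) '' U) := by
      rw [hcover]; exact hx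
    rw [mem_iUnion₂] at hxm
    obtain ⟨t, ht, u, hu, hux⟩ := hxm
    refine ⟨-(Real.logb 2 t), ?_⟩
    have hx_eq : x = dil lam (Real.logb 2 t) u := by
      rw [← hux]
      funext i
      rw [dil]
      rw [Real.rpow_mul (by norm_num : (0:ℝ) ≤ 2),
        Real.rpow_logb (by norm_num) (by norm_num) ht]
    rw [hx_eq, dil_dil, neg_add_cancel, dil_zero]
    exact hu
  -- trivial case: U empty
  by_cases hUe : U = ∅
  · refine ⟨1, one_pos, ?_⟩
    rw [hUe] at hcover ⊢
    simp only [image_empty, iUnion_empty, biUnion_empty] at hcover ⊢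
    · exact hcover
  obtain ⟨u₀, hu₀⟩ := nonempty_iff_ne_empty.mpr hUe
  -- Step B: local uniform intervals around each point of the support
  have key : ∀ x : tsupport η, ∃ ε : ℝ, 0 < ε ∧ ∃ s : ℝ, ∃ V : Set (Fin n → ℝ),
      IsOpen V ∧ (x : Fin n → ℝ) ∈ V ∧
      ∀ y ∈ V, ∀ r ∈ Ioo (s - ε) (s + ε), dil lam r y ∈ U := by
    rintro ⟨x, hxK⟩
    have hx0 : x ≠ 0 := fun h => hη0 (h ▸ hxK)
    obtain ⟨s, hs⟩ := hmove x hx0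
    have hO : IsOpen ((fun p : ℝ × (Fin n → ℝ) => dil lam p.1 p.2) ⁻¹' U) :=
      hUopen.preimage (continuous_dil lam)
    obtain ⟨w, v, hw, hv, hsw, hxv, hwv⟩ := isOpen_prod_iff.mp hO s x hs
    obtain ⟨ε, hε, hball⟩ := Metric.isOpen_iff.mp hw s hsw
    refine ⟨ε, hε, s, v, hv, hxv, ?_⟩
    intro y hy r hr
    have hrw : r ∈ w := hball (by rw [Real.ball_eq_Ioo]; exact hr)
    have hmemp : (r, y) ∈ w ×ˢ v := Set.mem_prod.mpr ⟨hrw, hy⟩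
    have h1 := hwv hmemp
    simp only [Set.mem_preimage] at h1
    exact h1
  choose εf hε sf Vf hVo hmem hgood using key
  have hcov2 : tsupport η ⊆ ⋃ i : tsupport η, Vf i := by
    intro x hx
    exact mem_iUnion.mpr ⟨⟨x, hx⟩, hmem ⟨x, hx⟩⟩
  obtain ⟨F, hF⟩ := hηcpt.elim_finite_subcover Vf hVo hcov2
  have hFne : F.Nonempty := by
    have := hF (hUK hu₀)
    rw [mem_iUnion₂] at this
    obtain ⟨i, hiF, _⟩ := this
    exact ⟨i, hiF⟩
  set a : ℝ := F.inf' hFne εf with ha_def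
  have ha : 0 < a := by
    rw [ha_def, Finset.lt_inf'_iff]
    intro i _
    exact hε i
  -- Step D: uniform-length intervals on the support
  have interval : ∀ x ∈ tsupport η, ∃ c : ℝ,
      ∀ r ∈ Ioo c (c + 2 * a), dil lam r x ∈ U := by
    intro x hxK
    obtain ⟨i, hiF, hxV⟩ := mem_iUnion₂.mp (hF hxK)
    refine ⟨sf i - εf i, ?_⟩
    intro r hr
    have hai : a ≤ εf i := Finset.inf'_le εf hiF
    exact hgood i x hxV r ⟨hr.1, by have := hr.2; linarith⟩
  refine ⟨a, ha, ?_⟩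
  apply Set.Subset.antisymm
  · intro x hx
    rw [mem_iUnion] at hx
    obtain ⟨j, hj⟩ := hx
    rw [← hcover]
    exact Set.mem_biUnion (Real.rpow_pos_of_pos (by norm_num) (a * (j : ℝ))) hj
  · intro x hx
    have hx0 : x ≠ 0 := hx
    obtain ⟨s₀, hs₀⟩ := hmove x hx0
    obtain ⟨c, hc⟩ := interval _ (hUK hs₀)
    set c' : ℝ := c + s₀ with hc'
    set k : ℤ := ⌊c' / a⌋ + 1 with hk
    have hk1 : c' < a * (k : ℝ) := by
      have h1 : c' / a < (k : ℝ) := by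
        rw [hk]; push_cast; exact Int.lt_floor_add_one _
      calc c' = a * (c' / a) := by field_simp
        _ < a * (k : ℝ) := by exact mul_lt_mul_of_pos_left h1 ha
    have hk2 : a * (k : ℝ) < c' + 2 * a := by
      have h1 : (k : ℝ) ≤ c' / a + 1 := by
        rw [hk]; push_cast
        have := Int.floor_le (c' / a)
        linarith
      have h2 : a * (k : ℝ) ≤ a * (c' / a + 1) := mul_le_mul_of_nonneg_left h1 ha.le
      have h3 : a * (c' / a + 1) = c' + a := by field_simp
      linarith
    have hu' : dil lam (a * (k : ℝ) - s₀) (dil lam s₀ x) ∈ U := by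
      apply hc
      constructor
      · rw [hc'] at hk1; linarith
      · rw [hc'] at hk2; linarith
    rw [dil_dil, sub_add_cancel] at hu'
    rw [mem_iUnion]
    refine ⟨-k, ?_⟩
    rw [dil_fun_eq]
    refine ⟨dil lam (a * (k : ℝ)) x, hu', ?_⟩
    rw [dil_dil]
    push_cast
    rw [show a * -(k:ℝ) + a * (k:ℝ) = 0 by ring, dil_zero]
end

section
/- Let δ_{1,t} and δ_{2,t} be dilations (with positive exponents) on ℝ^{n_1} and ℝ^{n_2} respectively, and let Φ : ℝ^{n_1} → ℝ^{n_2} be a continuous map satisfying Φ ∘ δ_{1,t} = δ_{2,t} ∘ Φ for all t > 0. Then Φ is a proper map (preimages of compact sets are compact) if and only if Φ(x) = 0 implies x = 0. Moreover, in that case, for every δ_{2,t}-homogeneous norm |·|_{δ_2} on ℝ^{n_2}, the function x ↦ |Φ(x)|_{δ_2} is a δ_{1,t}-homogeneous norm on ℝ^{n_1}. -/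
noncomputable def hmpRho (n : ℕ) (lam : Fin n → ℝ) (x : Fin n → ℝ) : ℝ :=
  ∑ i, |x i| ^ (1 / lam i)

lemma hmpRho_continuous (n : ℕ) (lam : Fin n → ℝ) (hlam : ∀ i, 0 < lam i) :
    Continuous (hmpRho n lam) := by
  apply continuous_finset_sum
  intro i _
  exact ((continuous_abs.comp (continuous_apply i)).rpow_const
    (fun x => Or.inr (le_of_lt (one_div_pos.mpr (hlam i)))))

lemma hmpRho_nonneg (n : ℕ) (lam : Fin n → ℝ) (x : Fin n → ℝ) : 0 ≤ hmpRho n lam x :=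
  Finset.sum_nonneg fun i _ => Real.rpow_nonneg (abs_nonneg _) _

lemma hmpRho_eq_zero (n : ℕ) (lam : Fin n → ℝ) (hlam : ∀ i, 0 < lam i) (x : Fin n → ℝ) :
    hmpRho n lam x = 0 ↔ x = 0 := by
  rw [hmpRho, Finset.sum_eq_zero_iff_of_nonneg
    (fun i _ => Real.rpow_nonneg (abs_nonneg _) _)]
  constructor
  · intro h
    funext i
    have := h i (Finset.mem_univ i)
    have h2 : |x i| = 0 := by
      by_contra hc
      exact hc (by
        have := (Real.rpow_eq_zero (abs_nonneg _) (ne_of_gt (one_div_pos.mpr (hlam i)))).mp this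
        exact this)
    simpa using abs_eq_zero.mp h2
  · rintro rfl i _
    simp only [Pi.zero_apply, abs_zero]
    exact Real.zero_rpow (ne_of_gt (one_div_pos.mpr (hlam i)))

lemma hmpRho_homog (n : ℕ) (lam : Fin n → ℝ) (hlam : ∀ i, 0 < lam i)
    (t : ℝ) (ht : 0 < t) (x : Fin n → ℝ) :
    hmpRho n lam (fun i => t ^ lam i * x i) = t * hmpRho n lam x := by
  rw [hmpRho, hmpRho, Finset.mul_sum]
  apply Finset.sum_congr rfl
  intro i _
  rw [abs_mul, abs_of_pos (Real.rpow_pos_of_pos ht _),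
    Real.mul_rpow (le_of_lt (Real.rpow_pos_of_pos ht _)) (abs_nonneg _),
    ← Real.rpow_mul (le_of_lt ht), mul_one_div_cancel (ne_of_gt (hlam i)), Real.rpow_one]

lemma hmpRho_coord_le (n : ℕ) (lam : Fin n → ℝ) (hlam : ∀ i, 0 < lam i)
    (y : Fin n → ℝ) (hy : hmpRho n lam y ≤ 1) (i : Fin n) : |y i| ≤ 1 := by
  have h1 : |y i| ^ (1 / lam i) ≤ 1 := by
    refine le_trans ?_ hy
    rw [hmpRho]
    exact Finset.single_le_sum (f := fun j => |y j| ^ (1 / lam j))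
      (fun j _ => Real.rpow_nonneg (abs_nonneg _) _) (Finset.mem_univ i)
  have h2 : (|y i| ^ (1 / lam i)) ^ lam i ≤ 1 :=
    Real.rpow_le_one (Real.rpow_nonneg (abs_nonneg _) _) h1 (le_of_lt (hlam i))
  rwa [← Real.rpow_mul (abs_nonneg _), one_div_mul_cancel (ne_of_gt (hlam i)),
    Real.rpow_one] at h2

lemma hmp_scale_back (n : ℕ) (lam : Fin n → ℝ) (hlam : ∀ i, 0 < lam i)
    (r : ℝ) (hr : 0 < r) (x : Fin n → ℝ) :
    x = fun i => r ^ lam i * ((1 / r) ^ lam i * x i) := by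
  funext i
  rw [← mul_assoc, ← Real.mul_rpow (le_of_lt hr) (le_of_lt (one_div_pos.mpr hr)),
    mul_one_div_cancel (ne_of_gt hr), Real.one_rpow, one_mul]

lemma hmp_sublevel_bounded (n : ℕ) (lam : Fin n → ℝ) (hlam : ∀ i, 0 < lam i)
    (N : (Fin n → ℝ) → ℝ) (hNc : Continuous N) (hNnn : ∀ x, 0 ≤ N x)
    (hN0 : ∀ x, N x = 0 → x = 0)
    (hNh : ∀ t : ℝ, 0 < t → ∀ x, N (fun i => t ^ lam i * x i) = t * N x)
    (c : ℝ) : Bornology.IsBounded {x | N x ≤ c} := by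
  classical
  set S : Set (Fin n → ℝ) := {y | hmpRho n lam y = 1} with hSdef
  have key : ∀ x : Fin n → ℝ, x ≠ 0 →
      ∃ r > 0, hmpRho n lam x = r ∧ (fun i => (1 / r) ^ lam i * x i) ∈ S := by
    intro x hx
    have hr : 0 < hmpRho n lam x := by
      rcases lt_or_eq_of_le (hmpRho_nonneg n lam x) with h | h
      · exact h
      · exact absurd ((hmpRho_eq_zero n lam hlam x).mp h.symm) hx
    refine ⟨hmpRho n lam x, hr, rfl, ?_⟩
    show hmpRho n lam _ = 1
    rw [hmpRho_homog n lam hlam _ (one_div_pos.mpr hr)]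
    field_simp
  by_cases hS : S.Nonempty
  · -- compactness of S
    have hSb : Bornology.IsBounded S := by
      rw [isBounded_iff_forall_norm_le]
      refine ⟨1, fun y hy => ?_⟩
      rw [pi_norm_le_iff_of_nonneg zero_le_one]
      intro i
      rw [Real.norm_eq_abs]
      exact hmpRho_coord_le n lam hlam y (le_of_eq hy) i
    have hScl : IsClosed S := isClosed_eq (hmpRho_continuous n lam hlam) continuous_const
    have hScomp : IsCompact S := Metric.isCompact_of_isClosed_isBounded hScl hSb
    obtain ⟨y₀, hy₀S, hy₀min⟩ := hScomp.exists_isMinOn hS hNc.continuousOn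
    have hm : 0 < N y₀ := by
      rcases lt_or_eq_of_le (hNnn y₀) with h | h
      · exact h
      · exfalso
        have hy0 : y₀ = 0 := hN0 y₀ h.symm
        have : hmpRho n lam y₀ = 1 := hy₀S
        rw [hy0, (hmpRho_eq_zero n lam hlam 0).mpr rfl] at this
        exact one_ne_zero this.symm  -- 0 = 1? check direction
    set m := N y₀ with hmdef
    set d : ℝ := max (c / m) 1 with hddef
    have hd : 0 < d := lt_max_of_lt_right zero_lt_one
    set C : ℝ := ∑ j, d ^ lam j with hCdef
    have hC0 : 0 ≤ C :=
      Finset.sum_nonneg fun j _ => le_of_lt (Real.rpow_pos_of_pos hd _)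
    rw [isBounded_iff_forall_norm_le]
    refine ⟨C, fun x hx => ?_⟩
    rw [pi_norm_le_iff_of_nonneg hC0]
    intro i
    rw [Real.norm_eq_abs]
    by_cases hx0 : x = 0
    · rw [hx0]; simpa using hC0
    · obtain ⟨r, hr, hrx, hyS⟩ := key x hx0
      set y : Fin n → ℝ := fun i => (1 / r) ^ lam i * x i with hydef
      have hxy : x = fun i => r ^ lam i * y i := hmp_scale_back n lam hlam r hr x
      have hNx : N x = r * N y := by
        conv_lhs => rw [hxy]
        exact hNh r hr y
      have hrle : r ≤ c / m := by
        rw [le_div_iff₀ hm]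
        calc r * m ≤ r * N y := by
              exact mul_le_mul_of_nonneg_left (hy₀min hyS) (le_of_lt hr)
          _ = N x := hNx.symm
          _ ≤ c := hx
      have hrd : r ≤ d := le_trans hrle (le_max_left _ _)
      have hyi : |y i| ≤ 1 := hmpRho_coord_le n lam hlam y (le_of_eq hyS) i
      calc |x i| = r ^ lam i * |y i| := by
            rw [hxy]
            rw [abs_mul, abs_of_pos (Real.rpow_pos_of_pos hr _)]
        _ ≤ r ^ lam i * 1 :=
            mul_le_mul_of_nonneg_left hyi (le_of_lt (Real.rpow_pos_of_pos hr _))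
        _ = r ^ lam i := mul_one _
        _ ≤ d ^ lam i :=
            Real.rpow_le_rpow (le_of_lt hr) hrd (le_of_lt (hlam i))
        _ ≤ C := Finset.single_le_sum
            (fun j _ => le_of_lt (Real.rpow_pos_of_pos hd _)) (Finset.mem_univ i)
  · -- S empty ⟹ space trivial on sublevel set
    have hsub : {x : Fin n → ℝ | N x ≤ c} ⊆ {0} := by
      intro x _
      by_contra hx0
      obtain ⟨r, hr, _, hyS⟩ := key x hx0
      exact hS ⟨_, hyS⟩
    exact (Bornology.isBounded_singleton (x := (0 : Fin n → ℝ))).subset hsub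


/-- Let `Φ : ℝ^{n₁} → ℝ^{n₂}` be continuous and homogeneous with respect to dilations
`δ_{1,t}`, `δ_{2,t}` (with positive exponents). Then `Φ` is proper iff `Φ(x) = 0` implies
`x = 0`; and in that case, for every `δ_{2,t}`-homogeneous norm `N₂` on `ℝ^{n₂}`, the function
`x ↦ N₂(Φ(x))` is a `δ_{1,t}`-homogeneous norm on `ℝ^{n₁}`. -/
theorem homogeneous_map_proper_iff
    (n₁ n₂ : ℕ) (lam₁ : Fin n₁ → ℝ) (lam₂ : Fin n₂ → ℝ)
    (hlam₁ : ∀ i, 0 < lam₁ i) (hlam₂ : ∀ i, 0 < lam₂ i)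
    (Φ : (Fin n₁ → ℝ) → (Fin n₂ → ℝ)) (hΦc : Continuous Φ)
    (hΦh : ∀ t : ℝ, 0 < t → ∀ x,
      Φ (fun i => t ^ lam₁ i * x i) = fun i => t ^ lam₂ i * Φ x i) :
    ((∀ K : Set (Fin n₂ → ℝ), IsCompact K → IsCompact (Φ ⁻¹' K)) ↔
      ∀ x, Φ x = 0 → x = 0) ∧
    ((∀ x, Φ x = 0 → x = 0) →
      ∀ N₂ : (Fin n₂ → ℝ) → ℝ, Continuous N₂ → (∀ y, 0 ≤ N₂ y) →
        (∀ y, N₂ y = 0 ↔ y = 0) →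
        (∀ t : ℝ, 0 < t → ∀ y, N₂ (fun i => t ^ lam₂ i * y i) = t * N₂ y) →
        Continuous (fun x => N₂ (Φ x)) ∧ (∀ x, 0 ≤ N₂ (Φ x)) ∧
          (∀ x, N₂ (Φ x) = 0 ↔ x = 0) ∧
          ∀ t : ℝ, 0 < t → ∀ x, N₂ (Φ (fun i => t ^ lam₁ i * x i)) = t * N₂ (Φ x)) := by
  have hΦ0 : Φ 0 = 0 := by
    have h := hΦh 2 (by norm_num) 0
    have h2 : (fun i => (2:ℝ) ^ lam₁ i * (0 : Fin n₁ → ℝ) i) = (0 : Fin n₁ → ℝ) := by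
      funext i; simp
    rw [h2] at h
    funext i
    have hi := congrFun h i
    have hgt : (1:ℝ) < 2 ^ lam₂ i :=
      Real.one_lt_rpow_iff_of_pos (by norm_num) |>.mpr (Or.inl ⟨by norm_num, hlam₂ i⟩)
    have h3 : Φ 0 i * ((2:ℝ) ^ lam₂ i - 1) = 0 := by linear_combination -hi
    rcases mul_eq_zero.mp h3 with h4 | h4
    · simpa using h4
    · linarith
  have forward : (∀ K : Set (Fin n₂ → ℝ), IsCompact K → IsCompact (Φ ⁻¹' K)) →
      ∀ x, Φ x = 0 → x = 0 := by
    intro hp x hx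
    by_contra hx0
    obtain ⟨i, hi⟩ := Function.ne_iff.mp hx0
    rw [Pi.zero_apply] at hi
    have hcomp := hp {0} isCompact_singleton
    obtain ⟨C, hC⟩ := isBounded_iff_forall_norm_le.mp hcomp.isBounded
    set s : ℝ := (max C 0 + 1) / |x i| with hsdef
    have hspos : 0 < s :=
      div_pos (by positivity) (abs_pos.mpr hi)
    set t : ℝ := s ^ (1 / lam₁ i) with htdef
    have ht : 0 < t := Real.rpow_pos_of_pos hspos _
    have htl : t ^ lam₁ i = s := by
      rw [htdef, ← Real.rpow_mul (le_of_lt hspos),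
        one_div_mul_cancel (ne_of_gt (hlam₁ i)), Real.rpow_one]
    have hmem : (fun j => t ^ lam₁ j * x j) ∈ Φ ⁻¹' {0} := by
      simp only [Set.mem_preimage, Set.mem_singleton_iff]
      rw [hΦh t ht x, hx]
      funext j; simp
    have hb := hC _ hmem
    have hcoord : |t ^ lam₁ i * x i| ≤ ‖(fun j => t ^ lam₁ j * x j)‖ := by
      rw [← Real.norm_eq_abs]
      exact norm_le_pi_norm (fun j => t ^ lam₁ j * x j : Fin n₁ → ℝ) i
    rw [abs_mul, abs_of_pos (Real.rpow_pos_of_pos ht _), htl] at hcoord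
    have hsx : s * |x i| = max C 0 + 1 :=
      div_mul_cancel₀ _ (ne_of_gt (abs_pos.mpr hi))
    rw [hsx] at hcoord
    have := le_max_left C 0
    linarith
  have backward : (∀ x, Φ x = 0 → x = 0) →
      ∀ K : Set (Fin n₂ → ℝ), IsCompact K → IsCompact (Φ ⁻¹' K) := by
    intro hker K hK
    set N : (Fin n₁ → ℝ) → ℝ := fun x => hmpRho n₂ lam₂ (Φ x) with hNdef
    have hNc : Continuous N := (hmpRho_continuous n₂ lam₂ hlam₂).comp hΦc
    have hNnn : ∀ x, 0 ≤ N x := fun x => hmpRho_nonneg n₂ lam₂ (Φ x)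
    have hN0 : ∀ x, N x = 0 → x = 0 := fun x h =>
      hker x ((hmpRho_eq_zero n₂ lam₂ hlam₂ (Φ x)).mp h)
    have hNh : ∀ t : ℝ, 0 < t → ∀ x, N (fun i => t ^ lam₁ i * x i) = t * N x := by
      intro t htpos x
      rw [hNdef]
      simp only
      rw [hΦh t htpos x, hmpRho_homog n₂ lam₂ hlam₂ t htpos]
    by_cases hKne : K.Nonempty
    · obtain ⟨y₀, _, hmax⟩ := hK.exists_isMaxOn hKne
        (hmpRho_continuous n₂ lam₂ hlam₂).continuousOn
      apply Metric.isCompact_of_isClosed_isBounded (hK.isClosed.preimage hΦc)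
      apply (hmp_sublevel_bounded n₁ lam₁ hlam₁ N hNc hNnn hN0 hNh
        (hmpRho n₂ lam₂ y₀)).subset
      intro x hx
      exact hmax hx
    · rw [Set.not_nonempty_iff_eq_empty] at hKne
      simp [hKne]
  refine ⟨⟨forward, backward⟩, ?_⟩
  intro hker N₂ hN₂c hN₂nn hN₂0 hN₂h
  refine ⟨hN₂c.comp hΦc, fun x => hN₂nn _, fun x => ?_, fun t ht x => ?_⟩
  · rw [hN₂0]
    constructor
    · exact hker x
    · rintro rfl; exact hΦ0
  · rw [hΦh t ht x, hN₂h t ht]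
end
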